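/- arXiv:math/0111112 — 2 statements merged into one kernel-verified Lean document; each statement's English description precedes it below -/
import Mathlib

section
/- Let m' ≥ m and n' ≥ n be positive integers. The k_q-algebra homomorphism E^q_{(m',n',m,n)} : k_q[a]_{m',n'} → k_q[a]_{m,n} maps quantum minors as follows: E^q(D_{j_0...j_{m'-1}}) = D_{l_0...l_{m-1}} if (j_0,...,j_{m'-1}) = (-m',...,-m-1,l_0,...,l_{m-1}) with -m ≤ l_0 < ... < l_{m-1} ≤ n-1, and E^q(D_{j_0...j_{m'-1}}) = 0 otherwise. Consequently E^q restricts to a surjective k_q-algebra homomorphism e^q_{(m',n',m,n)} : k_q[Δ_{m',n'}] → k_q[Δ_{m,n}]. -/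
set_option maxHeartbeats 2000000
set_option synthInstance.maxHeartbeats 400000

noncomputable section

open TensorProduct

/-- `k_q = k[q, q⁻¹]`, the ring of Laurent polynomials over `k`. -/
abbrev kq (k : Type) [Field k] : Type := LaurentPolynomial k

/-- The parameter `q ∈ k_q`. -/
def qParam (k : Type) [Field k] : kq k := LaurentPolynomial.T 1

/-- The inverse parameter `q⁻¹ ∈ k_q`. -/
def qInv (k : Type) [Field k] : kq k := LaurentPolynomial.T (-1)

/-- Row indices of the generic `(m+n) × m` quantum matrix: integers `-m, ..., n-1`. -/
abbrev RowI (m n : ℕ) : Type := ↥(Finset.Icc (-(m : ℤ)) ((n : ℤ) - 1))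

/-- Column indices: integers `-m, ..., -1`. -/
abbrev ColI (m : ℕ) : Type := ↥(Finset.Icc (-(m : ℤ)) (-1 : ℤ))

/-- The defining relations of a quantum matrix algebra, with rows indexed by `R` and
columns indexed by `C`. -/
inductive QMRel (k : Type) [Field k] (R C : Type) [LinearOrder R] [LinearOrder C] :
    FreeAlgebra (kq k) (R × C) → FreeAlgebra (kq k) (R × C) → Prop
  | col (i i' : R) (j : C) (h : i < i') :
      QMRel k R C (FreeAlgebra.ι (kq k) (i, j) * FreeAlgebra.ι (kq k) (i', j))
        (qInv k • (FreeAlgebra.ι (kq k) (i', j) * FreeAlgebra.ι (kq k) (i, j)))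
  | row (i : R) (j j' : C) (h : j < j') :
      QMRel k R C (FreeAlgebra.ι (kq k) (i, j) * FreeAlgebra.ι (kq k) (i, j'))
        (qInv k • (FreeAlgebra.ι (kq k) (i, j') * FreeAlgebra.ι (kq k) (i, j)))
  | comm (i i' : R) (j j' : C) (h1 : i < i') (h2 : j' < j) :
      QMRel k R C (FreeAlgebra.ι (kq k) (i, j) * FreeAlgebra.ι (kq k) (i', j'))
        (FreeAlgebra.ι (kq k) (i', j') * FreeAlgebra.ι (kq k) (i, j))
  | qcomm (i i' : R) (j j' : C) (h1 : i < i') (h2 : j < j') :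
      QMRel k R C
        (FreeAlgebra.ι (kq k) (i, j) * FreeAlgebra.ι (kq k) (i', j') -
          FreeAlgebra.ι (kq k) (i', j') * FreeAlgebra.ι (kq k) (i, j))
        ((qInv k - qParam k) • (FreeAlgebra.ι (kq k) (i', j) * FreeAlgebra.ι (kq k) (i, j')))

/-- The quantum matrix algebra with rows indexed by `R` and columns indexed by `C`. -/
abbrev QMatG (k : Type) [Field k] (R C : Type) [LinearOrder R] [LinearOrder C] : Type :=
  RingQuot (QMRel k R C)

/-- The generator `a_{r,c}` of the quantum matrix algebra. -/
def qgen (k : Type) [Field k] (R C : Type) [LinearOrder R] [LinearOrder C] (r : R) (c : C) :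
    QMatG k R C :=
  RingQuot.mkAlgHom (kq k) (QMRel k R C) (FreeAlgebra.ι (kq k) (r, c))

/-- The rectangular quantum matrix algebra `k_q[a]_{m,n}`. -/
abbrev QMat (k : Type) [Field k] (m n : ℕ) : Type := QMatG k (RowI m n) (ColI m)

/-- The generator `a_{i,j}` of `k_q[a]_{m,n}`. -/
def av (k : Type) [Field k] (m n : ℕ) (i : RowI m n) (j : ColI m) : QMat k m n :=
  qgen k (RowI m n) (ColI m) i j

/-- The number of inversions of a map between finite linearly ordered sets. -/
def inversions {a b : ℕ} (f : Fin a → Fin b) : ℕ :=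
  ((Finset.univ : Finset (Fin a × Fin a)).filter fun p => p.1 < p.2 ∧ f p.2 < f p.1).card

/-- The coefficient `(-q)^{-ℓ}`. -/
def qCoeff (k : Type) [Field k] (l : ℕ) : kq k :=
  (-1 : kq k) ^ l * LaurentPolynomial.T (-(l : ℤ))

/-- The general quantum minor on rows `row 0 < row 1 < ⋯` and columns
`col 0 < col 1 < ⋯`:
`Σ_σ (-q)^{-ℓ(σ)} a_{row 0, col (σ 0)} ⋯ a_{row (s-1), col (σ (s-1))}`. -/
def qMinorG (k : Type) [Field k] (R C : Type) [LinearOrder R] [LinearOrder C]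
    (s : ℕ) (row : Fin s → R) (col : Fin s → C) : QMatG k R C :=
  ∑ σ : Equiv.Perm (Fin s),
    qCoeff k (inversions ⇑σ) •
      (List.ofFn fun t : Fin s => qgen k R C (row t) (col (σ t))).prod

/-- The quantum minor `D_{i_0 … i_{m-1}}` of `k_q[a]_{m,n}` on the rows in `I`. -/
def qMinor (k : Type) [Field k] (m n : ℕ) (I : Finset ℤ) (hI : I.card = m)
    (hsub : I ⊆ Finset.Icc (-(m : ℤ)) ((n : ℤ) - 1)) : QMat k m n :=
  qMinorG k (RowI m n) (ColI m) m
    (fun s => ⟨I.orderEmbOfFin hI s, hsub (Finset.orderEmbOfFin_mem I hI s)⟩)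
    (fun t => ⟨-(m : ℤ) + (t : ℕ), by
      have := t.2
      simp only [Finset.mem_Icc]
      omega⟩)

/-- The quantum grassmannian `k_q[Δ_{m,n}]`: the subalgebra of `k_q[a]_{m,n}` generated
by the quantum minors. -/
def QDeltaSub (k : Type) [Field k] (m n : ℕ) : Subalgebra (kq k) (QMat k m n) :=
  Algebra.adjoin (kq k) {x | ∃ I hI hsub, x = qMinor k m n I hI hsub}

/-- The defining property of `E^q_{(m',n',m,n)}` on the generators. -/
def EqProp (k : Type) [Field k] (m n m' n' : ℕ)
    (E : QMat k m' n' →ₐ[kq k] QMat k m n) : Prop :=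
  ∀ (i : RowI m' n') (j : ColI m'),
    E (av k m' n' i j) =
      if h : (i.1 ∈ Finset.Icc (-(m : ℤ)) ((n : ℤ) - 1)) ∧
          (j.1 ∈ Finset.Icc (-(m : ℤ)) (-1 : ℤ)) then
        av k m n ⟨i.1, h.1⟩ ⟨j.1, h.2⟩
      else if i.1 = j.1 then 1 else 0


set_option maxHeartbeats 2000000

def extFun {d m m' : ℕ} (hd : d + m = m') (τ : Equiv.Perm (Fin m)) : Fin m' → Fin m' :=
  fun t => if h : (t : ℕ) < d then t else
    ⟨d + τ ⟨t.1 - d, by have := t.isLt; omega⟩,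
     by have := (τ ⟨t.1 - d, by have := t.isLt; omega⟩).isLt; omega⟩

lemma extFun_lt {d m m' : ℕ} (hd : d + m = m') (τ : Equiv.Perm (Fin m)) (t : Fin m')
    (h : (t : ℕ) < d) : extFun hd τ t = t := dif_pos h

lemma extFun_val_ge {d m m' : ℕ} (hd : d + m = m') (τ : Equiv.Perm (Fin m)) (t : Fin m')
    (h : ¬ (t : ℕ) < d) (p : t.1 - d < m) :
    (extFun hd τ t : ℕ) = d + τ ⟨t.1 - d, p⟩ := by
  unfold extFun; rw [dif_neg h]

lemma extFun_inj {d m m' : ℕ} (hd : d + m = m') (τ : Equiv.Perm (Fin m)) :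
    Function.Injective (extFun hd τ) := by
  intro a b hab
  have hv := congrArg Fin.val hab
  by_cases ha : (a : ℕ) < d <;> by_cases hb : (b : ℕ) < d
  · rwa [extFun_lt hd τ a ha, extFun_lt hd τ b hb] at hab
  · have pb : b.1 - d < m := by have := b.isLt; omega
    rw [extFun_lt hd τ a ha, extFun_val_ge hd τ b hb pb] at hv
    omega
  · have pa : a.1 - d < m := by have := a.isLt; omega
    rw [extFun_val_ge hd τ a ha pa, extFun_lt hd τ b hb] at hv
    omega
  · have pa : a.1 - d < m := by have := a.isLt; omega
    have pb : b.1 - d < m := by have := b.isLt; omega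
    rw [extFun_val_ge hd τ a ha pa, extFun_val_ge hd τ b hb pb] at hv
    have h2 : (⟨a.1 - d, pa⟩ : Fin m) = ⟨b.1 - d, pb⟩ := τ.injective (Fin.ext (by omega))
    simp only [Fin.mk.injEq] at h2
    exact Fin.ext (by omega)

noncomputable def extPerm {d m m' : ℕ} (hd : d + m = m') (τ : Equiv.Perm (Fin m)) :
    Equiv.Perm (Fin m') :=
  Equiv.ofBijective _ (Finite.injective_iff_bijective.mp (extFun_inj hd τ))

lemma extPerm_lt {d m m' : ℕ} (hd : d + m = m') (τ : Equiv.Perm (Fin m)) (t : Fin m')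
    (h : (t : ℕ) < d) : extPerm hd τ t = t := dif_pos h

lemma extPerm_val_ge {d m m' : ℕ} (hd : d + m = m') (τ : Equiv.Perm (Fin m)) (t : Fin m')
    (h : ¬ (t : ℕ) < d) (p : t.1 - d < m) :
    (extPerm hd τ t : ℕ) = d + τ ⟨t.1 - d, p⟩ := extFun_val_ge hd τ t h p

lemma extPerm_val_add {d m m' : ℕ} (hd : d + m = m') (τ : Equiv.Perm (Fin m)) (s : Fin m)
    (p : d + s.1 < m') :
    (extPerm hd τ ⟨d + s.1, p⟩ : ℕ) = d + τ s := by
  rw [extPerm_val_ge hd τ _ (by simp) (by have := s.isLt; omega)]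
  congr 2
  exact Fin.ext (by simp)

lemma extPerm_injective {d m m' : ℕ} (hd : d + m = m') :
    Function.Injective (extPerm (m := m) (m' := m') hd) := by
  intro τ τ' h
  ext s
  have p : d + s.1 < m' := by have := s.isLt; omega
  have h1 := congrArg (fun σ : Equiv.Perm (Fin m') => (σ ⟨d + s.1, p⟩ : ℕ)) h
  simp only [extPerm_val_add] at h1
  omega

lemma good_ge {m' : ℕ} (σ : Equiv.Perm (Fin m')) (d : ℕ)
    (hg : ∀ t : Fin m', (t : ℕ) < d → σ t = t) (t : Fin m') (ht : ¬ (t : ℕ) < d) :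
    ¬ (σ t : ℕ) < d := by
  intro hlt
  have h1 := hg (σ t) hlt
  have h2 := σ.injective h1
  rw [h2] at hlt
  exact ht hlt

lemma good_exists_ext {d m m' : ℕ} (hd : d + m = m') (σ : Equiv.Perm (Fin m'))
    (hg : ∀ t : Fin m', (t : ℕ) < d → σ t = t) : ∃ τ : Equiv.Perm (Fin m), extPerm hd τ = σ := by
  have hp : ∀ s : Fin m, d + s.1 < m' := fun s => by have := s.isLt; omega
  have hge : ∀ s : Fin m, ¬ ((σ ⟨d + s.1, hp s⟩ : Fin m') : ℕ) < d :=
    fun s => good_ge σ d hg _ (by simp)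
  set f : Fin m → Fin m := fun s =>
    ⟨(σ ⟨d + s.1, hp s⟩ : Fin m').1 - d, by
      have := (σ ⟨d + s.1, hp s⟩).isLt; have := hge s; omega⟩ with hf
  have finj : Function.Injective f := by
    intro s1 s2 h12
    have hv := congrArg Fin.val h12
    simp only [hf] at hv
    have h1 := hge s1
    have h2 := hge s2
    have h3 : σ ⟨d + s1.1, hp s1⟩ = σ ⟨d + s2.1, hp s2⟩ := Fin.ext (by omega)
    have h4 := congrArg Fin.val (σ.injective h3)
    simp only at h4
    exact Fin.ext (by omega)
  refine ⟨Equiv.ofBijective f (Finite.injective_iff_bijective.mp finj), ?_⟩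
  apply Equiv.ext
  intro t
  by_cases ht : (t : ℕ) < d
  · rw [extPerm_lt hd _ t ht, hg t ht]
  · have pt : t.1 - d < m := by have := t.isLt; omega
    apply Fin.ext
    rw [extPerm_val_ge hd _ t ht pt]
    show d + (f ⟨t.1 - d, pt⟩).1 = _
    simp only [hf]
    have h5 : (⟨d + (t.1 - d), hp ⟨t.1 - d, pt⟩⟩ : Fin m') = t := Fin.ext (by simp; omega)
    rw [h5]
    have := hge ⟨t.1 - d, pt⟩
    rw [h5] at this
    omega

lemma ext_pair_ge {d m m' : ℕ} (hd : d + m = m') (τ : Equiv.Perm (Fin m)) {a b : Fin m'}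
    (hab : (a : ℕ) < b) (hba : ((extPerm hd τ b : Fin m') : ℕ) < ((extPerm hd τ a : Fin m') : ℕ)) :
    d ≤ (a : ℕ) := by
  by_contra hA
  rw [extPerm_lt hd τ a (by omega)] at hba
  by_cases hB : (b : ℕ) < d
  · rw [extPerm_lt hd τ b hB] at hba; omega
  · have pb : b.1 - d < m := by have := b.isLt; omega
    rw [extPerm_val_ge hd τ b hB pb] at hba; omega

lemma inversions_extPerm {d m m' : ℕ} (hd : d + m = m') (τ : Equiv.Perm (Fin m)) :
    inversions ⇑(extPerm hd τ) = inversions ⇑τ := by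
  unfold inversions
  set jf : Fin m × Fin m → Fin m' × Fin m' := fun p =>
    ((⟨d + p.1.1, by have := p.1.isLt; omega⟩ : Fin m'),
     (⟨d + p.2.1, by have := p.2.isLt; omega⟩ : Fin m')) with hjf
  have himg : (Finset.univ.filter fun p : Fin m' × Fin m' =>
      p.1 < p.2 ∧ extPerm hd τ p.2 < extPerm hd τ p.1) =
      Finset.image jf (Finset.univ.filter fun p : Fin m × Fin m =>
        p.1 < p.2 ∧ τ p.2 < τ p.1) := by
    ext p
    simp only [Finset.mem_filter, Finset.mem_image, Finset.mem_univ, true_and]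
    constructor
    · rintro ⟨h1, h2⟩
      rw [Fin.lt_def] at h1 h2
      have ha := ext_pair_ge hd τ h1 h2
      have hb : d ≤ p.2.1 := by omega
      have pa : p.1.1 - d < m := by have := p.1.isLt; omega
      have pb : p.2.1 - d < m := by have := p.2.isLt; omega
      have e1 := extPerm_val_ge hd τ p.1 (by omega) pa
      have e2 := extPerm_val_ge hd τ p.2 (by omega) pb
      refine ⟨(⟨p.1.1 - d, pa⟩, ⟨p.2.1 - d, pb⟩), ⟨?_, ?_⟩, ?_⟩
      · rw [Fin.lt_def]; simp only; omega
      · rw [Fin.lt_def]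
        show ((τ ⟨p.2.1 - d, pb⟩ : Fin m) : ℕ) < ((τ ⟨p.1.1 - d, pa⟩ : Fin m) : ℕ)
        omega
      · simp only [hjf]
        apply Prod.ext <;> apply Fin.ext <;> simp only <;> omega
    · rintro ⟨q, ⟨h1, h2⟩, rfl⟩
      rw [Fin.lt_def] at h1 h2
      have e1 := extPerm_val_add hd τ q.1 (by have := q.1.isLt; omega)
      have e2 := extPerm_val_add hd τ q.2 (by have := q.2.isLt; omega)
      constructor
      · rw [Fin.lt_def]; simp only [hjf]; omega
      · rw [Fin.lt_def]; simp only [hjf]; rw [e1, e2]; omega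
  rw [himg, Finset.card_image_of_injOn]
  intro p _ q _ hpq
  simp only [hjf, Prod.mk.injEq, Fin.mk.injEq] at hpq
  apply Prod.ext <;> apply Fin.ext <;> omega

lemma listProdOnes {M : Type*} [Monoid M] {d m m' : ℕ} (hd : d + m = m')
    (g : Fin m' → M) (h : Fin m → M)
    (hg1 : ∀ t : Fin m', (t : ℕ) < d → g t = 1)
    (hg2 : ∀ (s : Fin m) (p : d + s.1 < m'), g ⟨d + s.1, p⟩ = h s) :
    (List.ofFn g).prod = (List.ofFn h).prod := by
  have hlist : List.ofFn g = List.replicate d 1 ++ List.ofFn h := by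
    apply List.ext_getElem
    · simp; omega
    · intro i hi1 hi2
      rw [List.getElem_ofFn]
      by_cases hid : i < d
      · rw [List.getElem_append_left (by simpa using hid)]
        rw [List.getElem_replicate]
        exact hg1 _ hid
      · rw [List.getElem_append_right (by simpa using hid)]
        simp only [List.length_replicate]
        rw [List.getElem_ofFn]
        have hi : i < m' := by simpa using hi1
        have hs : i - d < m := by omega
        have := hg2 ⟨i - d, hs⟩ (by omega)
        simp only at this
        rw [← this]
        congr 1
        exact Fin.ext (by simp; omega)
  rw [hlist, List.prod_append, List.prod_replicate, one_pow, one_mul]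


section KeyLemmas

variable {k : Type} [Field k] {m n m' n' : ℕ}

lemma hE'_of (E : QMat k m' n' →ₐ[kq k] QMat k m n) (hE : EqProp k m n m' n' E) :
    ∀ (i : RowI m' n') (j : ColI m'),
      E (qgen k (RowI m' n') (ColI m') i j) =
        if h : ((i : ℤ) ∈ Finset.Icc (-(m : ℤ)) ((n : ℤ) - 1)) ∧
            ((j : ℤ) ∈ Finset.Icc (-(m : ℤ)) (-1 : ℤ)) then
          av k m n ⟨(i : ℤ), h.1⟩ ⟨(j : ℤ), h.2⟩
        else if (i : ℤ) = (j : ℤ) then 1 else 0 := hE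

lemma cardS_eq (hmm : m ≤ m') :
    (Finset.Icc (-(m' : ℤ)) (-(m : ℤ) - 1)).card = m' - m := by
  rw [Int.card_Icc]; omega

lemma card_filter_perm_lt {m' : ℕ} (σ : Equiv.Perm (Fin m')) (d : ℕ) (hd : d ≤ m') :
    (Finset.univ.filter fun t : Fin m' => ((σ t : Fin m') : ℕ) < d).card = d := by
  have key : (Finset.univ.filter fun t : Fin m' => ((σ t : Fin m') : ℕ) < d).card
      = (Finset.range d).card := by
    apply Finset.card_bij' (i := fun t _ => ((σ t : Fin m') : ℕ))
      (j := fun u hu => σ.symm ⟨u, lt_of_lt_of_le (Finset.mem_range.mp hu) hd⟩)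
    case hi =>
      intro a ha
      exact Finset.mem_range.mpr (Finset.mem_filter.mp ha).2
    case hj =>
      intro u hu
      simp only [Finset.mem_filter, Finset.mem_univ, true_and, Equiv.apply_symm_apply]
      exact Finset.mem_range.mp hu
    case left_inv =>
      intro a ha
      rw [Fin.eta, Equiv.symm_apply_apply]
    case right_inv =>
      intro u hu
      rw [Equiv.apply_symm_apply]
  rw [key, Finset.card_range]

lemma qMinor_congr {I I' : Finset ℤ} (h : I = I') (hI : I.card = m)
    (hsub : I ⊆ Finset.Icc (-(m : ℤ)) ((n : ℤ) - 1)) (hI' : I'.card = m)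
    (hsub' : I' ⊆ Finset.Icc (-(m : ℤ)) ((n : ℤ) - 1)) :
    qMinor k m n I hI hsub = qMinor k m n I' hI' hsub' := by
  subst h; rfl

lemma zcase (hmm : m ≤ m') (E : QMat k m' n' →ₐ[kq k] QMat k m n) (hE : EqProp k m n m' n' E)
    (J : Finset ℤ) (hJ : J.card = m') (hJsub : J ⊆ Finset.Icc (-(m' : ℤ)) ((n' : ℤ) - 1))
    (hbad : ¬(Finset.Icc (-(m' : ℤ)) (-(m : ℤ) - 1) ⊆ J ∧
      J \ Finset.Icc (-(m' : ℤ)) (-(m : ℤ) - 1) ⊆ Finset.Icc (-(m : ℤ)) ((n : ℤ) - 1))) :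
    E (qMinor k m' n' J hJ hJsub) = 0 := by
  classical
  have hE' := hE'_of E hE
  set S := Finset.Icc (-(m' : ℤ)) (-(m : ℤ) - 1) with hSdef
  set d := m' - m with hddef
  unfold qMinor qMinorG
  rw [map_sum]
  apply Finset.sum_eq_zero
  intro σ _
  rw [map_smul, map_list_prod, List.map_ofFn]
  by_cases hsub2 : J \ S ⊆ Finset.Icc (-(m : ℤ)) ((n : ℤ) - 1)
  · -- then S ⊄ J ; pigeonhole to get a vanishing entry
    have hnS : ¬ S ⊆ J := fun h => hbad ⟨h, hsub2⟩
    have cardJS : (J ∩ S).card < d := by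
      have hss : J ∩ S ⊂ S := by
        refine Finset.ssubset_iff_subset_ne.mpr ⟨Finset.inter_subset_right, ?_⟩
        intro hEq
        exact hnS (fun x hx => (Finset.mem_inter.mp (hEq.symm ▸ hx)).1)
      have h1 := Finset.card_lt_card hss
      rwa [cardS_eq hmm] at h1
    have cardA := card_filter_perm_lt σ d (by omega)
    have cardB : (Finset.univ.filter fun t : Fin m' =>
        (J.orderEmbOfFin hJ t : ℤ) ≤ -(m : ℤ) - 1).card ≤ (J ∩ S).card := by
      apply Finset.card_le_card_of_injOn (fun t => (J.orderEmbOfFin hJ t : ℤ))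
      · intro t ht
        simp only [Finset.mem_coe, Finset.mem_filter, Finset.mem_univ, true_and] at ht
        refine Finset.mem_inter.mpr ⟨Finset.orderEmbOfFin_mem J hJ t, ?_⟩
        rw [hSdef, Finset.mem_Icc]
        have h2 := hJsub (Finset.orderEmbOfFin_mem J hJ t)
        rw [Finset.mem_Icc] at h2
        exact ⟨h2.1, ht⟩
      · intro a _ b _ hab
        exact (J.orderEmbOfFin hJ).injective hab
    have hAB : ¬ ((Finset.univ.filter fun t : Fin m' => ((σ t : Fin m') : ℕ) < d) ⊆
        (Finset.univ.filter fun t : Fin m' => (J.orderEmbOfFin hJ t : ℤ) ≤ -(m : ℤ) - 1)) := by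
      intro hsub
      have := Finset.card_le_card hsub
      omega
    obtain ⟨t₀, ht₀A, ht₀B⟩ := Finset.not_subset.mp hAB
    simp only [Finset.mem_filter, Finset.mem_univ, true_and] at ht₀A ht₀B
    rw [List.prod_eq_zero, smul_zero]
    rw [List.mem_ofFn]
    refine ⟨t₀, ?_⟩
    simp only [Function.comp_apply]
    rw [hE', dif_neg, if_neg]
    · -- (i : ℤ) ≠ (j : ℤ)
      show ¬ (J.orderEmbOfFin hJ t₀ : ℤ) = -(m' : ℤ) + ((σ t₀ : Fin m') : ℕ)
      omega
    · -- ¬ cond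
      rintro ⟨-, hj⟩
      replace hj : -(m : ℤ) ≤ -(m' : ℤ) + ((σ t₀ : Fin m') : ℕ) ∧
          -(m' : ℤ) + ((σ t₀ : Fin m') : ℕ) ≤ -1 := Finset.mem_Icc.mp hj
      omega
  · -- some row of J \ S is outside Icc (-m) (n-1)
    obtain ⟨r, hrJS, hrn⟩ := Finset.not_subset.mp hsub2
    have hrJ : r ∈ J := (Finset.mem_sdiff.mp hrJS).1
    have hrS : r ∉ S := (Finset.mem_sdiff.mp hrJS).2
    have hrn' : ¬(-(m : ℤ) ≤ r ∧ r ≤ (n : ℤ) - 1) := fun h => hrn (Finset.mem_Icc.mpr h)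
    have hrS' : ¬(-(m' : ℤ) ≤ r ∧ r ≤ -(m : ℤ) - 1) := fun h => hrS (Finset.mem_Icc.mpr h)
    have hrJ' : -(m' : ℤ) ≤ r ∧ r ≤ (n' : ℤ) - 1 := Finset.mem_Icc.mp (hJsub hrJ)
    obtain ⟨t₀, ht₀⟩ := Set.mem_range.mp
      ((Finset.range_orderEmbOfFin J hJ).symm ▸ (Finset.mem_coe.mpr hrJ))
    rw [List.prod_eq_zero, smul_zero]
    rw [List.mem_ofFn]
    refine ⟨t₀, ?_⟩
    simp only [Function.comp_apply]
    rw [hE', dif_neg, if_neg]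
    · show ¬ (J.orderEmbOfFin hJ t₀ : ℤ) = -(m' : ℤ) + ((σ t₀ : Fin m') : ℕ)
      have := (σ t₀).isLt
      rw [ht₀]
      omega
    · rintro ⟨hi, -⟩
      replace hi : -(m : ℤ) ≤ (J.orderEmbOfFin hJ t₀ : ℤ) ∧
          (J.orderEmbOfFin hJ t₀ : ℤ) ≤ (n : ℤ) - 1 := Finset.mem_Icc.mp hi
      rw [ht₀] at hi
      omega

lemma gcase (hmm : m ≤ m') (hnn : n ≤ n')
    (E : QMat k m' n' →ₐ[kq k] QMat k m n) (hE : EqProp k m n m' n' E)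
    (J : Finset ℤ) (hJ : J.card = m') (hJsub : J ⊆ Finset.Icc (-(m' : ℤ)) ((n' : ℤ) - 1))
    (hS : Finset.Icc (-(m' : ℤ)) (-(m : ℤ) - 1) ⊆ J)
    (hIsub : J \ Finset.Icc (-(m' : ℤ)) (-(m : ℤ) - 1) ⊆ Finset.Icc (-(m : ℤ)) ((n : ℤ) - 1))
    (hI : (J \ Finset.Icc (-(m' : ℤ)) (-(m : ℤ) - 1)).card = m) :
    E (qMinor k m' n' J hJ hJsub) =
      qMinor k m n (J \ Finset.Icc (-(m' : ℤ)) (-(m : ℤ) - 1)) hI hIsub := by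
  classical
  have hE' := hE'_of E hE
  set d := m' - m with hddef
  have hdm : d + m = m' := by
    have h1 := Finset.card_le_card hS
    rw [cardS_eq hmm, hJ] at h1
    omega
  set S := Finset.Icc (-(m' : ℤ)) (-(m : ℤ) - 1) with hSdef
  set I := J \ S with hIdef
  have hrowf : (fun t : Fin m' => if h : (t : ℕ) < d then (-(m' : ℤ) + t)
      else (I.orderEmbOfFin hI ⟨t.1 - d, by have := t.isLt; omega⟩ : ℤ)) =
      ⇑(J.orderEmbOfFin hJ) := by
    apply Finset.orderEmbOfFin_unique
    · intro t
      by_cases h : (t : ℕ) < d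
      · rw [dif_pos h]
        apply hS
        rw [hSdef, Finset.mem_Icc]
        constructor <;> omega
      · rw [dif_neg h]
        exact Finset.sdiff_subset (Finset.orderEmbOfFin_mem I hI _)
    · intro t1 t2 h12
      dsimp only
      have h12' : (t1 : ℕ) < t2 := h12
      by_cases h1 : (t1 : ℕ) < d <;> by_cases h2 : (t2 : ℕ) < d
      · rw [dif_pos h1, dif_pos h2]
        omega
      · rw [dif_pos h1, dif_neg h2]
        refine lt_of_le_of_lt (show -(m' : ℤ) + t1 ≤ -(m : ℤ) - 1 by omega) ?_
        refine lt_of_lt_of_le (show -(m : ℤ) - 1 < -(m : ℤ) by omega) ?_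
        exact (Finset.mem_Icc.mp (hIsub (Finset.orderEmbOfFin_mem I hI _))).1
      · exact absurd h2 (by omega)
      · rw [dif_neg h1, dif_neg h2]
        apply (I.orderEmbOfFin hI).strictMono
        rw [Fin.lt_def]
        simp only
        omega
  have R1 : ∀ (t : Fin m'), (t : ℕ) < d → (J.orderEmbOfFin hJ t : ℤ) = -(m' : ℤ) + t := by
    intro t h
    rw [← congrFun hrowf t, dif_pos h]
  have R2 : ∀ (t : Fin m') (h : ¬ (t : ℕ) < d) (p : t.1 - d < m),
      (J.orderEmbOfFin hJ t : ℤ) = (I.orderEmbOfFin hI ⟨t.1 - d, p⟩ : ℤ) := by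
    intro t h p
    rw [← congrFun hrowf t, dif_neg h]
  unfold qMinor qMinorG
  rw [map_sum]
  rw [← Finset.sum_filter_add_sum_filter_not Finset.univ
    (fun σ : Equiv.Perm (Fin m') => ∀ t : Fin m', (t : ℕ) < d → σ t = t)]
  have hvanish : ∀ σ ∈ Finset.univ.filter (fun σ : Equiv.Perm (Fin m') =>
      ¬ ∀ t : Fin m', (t : ℕ) < d → σ t = t),
      E (qCoeff k (inversions ⇑σ) • (List.ofFn fun t : Fin m' =>
        qgen k (RowI m' n') (ColI m')
          ⟨J.orderEmbOfFin hJ t, hJsub (Finset.orderEmbOfFin_mem J hJ t)⟩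
          ⟨-(m' : ℤ) + ((σ t : Fin m') : ℕ), by
            have := (σ t).2; simp only [Finset.mem_Icc]; omega⟩).prod) = 0 := by
    intro σ hσ
    simp only [Finset.mem_filter, Finset.mem_univ, true_and] at hσ
    push_neg at hσ
    obtain ⟨t₀, ht₀d, ht₀⟩ := hσ
    have hval : ((σ t₀ : Fin m') : ℕ) ≠ (t₀ : ℕ) := fun h => ht₀ (Fin.ext h)
    rw [map_smul, map_list_prod, List.map_ofFn]
    rw [List.prod_eq_zero, smul_zero]
    rw [List.mem_ofFn]
    refine ⟨t₀, ?_⟩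
    simp only [Function.comp_apply]
    rw [hE', dif_neg, if_neg]
    · show ¬ (J.orderEmbOfFin hJ t₀ : ℤ) = -(m' : ℤ) + ((σ t₀ : Fin m') : ℕ)
      rw [R1 t₀ ht₀d]
      omega
    · rintro ⟨hi, -⟩
      replace hi : -(m : ℤ) ≤ (J.orderEmbOfFin hJ t₀ : ℤ) ∧
          (J.orderEmbOfFin hJ t₀ : ℤ) ≤ (n : ℤ) - 1 := Finset.mem_Icc.mp hi
      rw [R1 t₀ ht₀d] at hi
      omega
  rw [Finset.sum_eq_zero hvanish, add_zero]
  have himg : Finset.univ.filter (fun σ : Equiv.Perm (Fin m') =>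
      ∀ t : Fin m', (t : ℕ) < d → σ t = t) = Finset.image (extPerm hdm) Finset.univ := by
    ext σ
    simp only [Finset.mem_filter, Finset.mem_univ, true_and, Finset.mem_image]
    constructor
    · intro hg
      obtain ⟨τ, hτ⟩ := good_exists_ext hdm σ hg
      exact ⟨τ, hτ⟩
    · rintro ⟨τ, -, rfl⟩
      exact fun t ht => extPerm_lt hdm τ t ht
  rw [himg, Finset.sum_image (fun a _ b _ h => extPerm_injective hdm h)]
  apply Finset.sum_congr rfl
  intro τ _
  rw [map_smul, map_list_prod, List.map_ofFn, inversions_extPerm hdm τ]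
  congr 1
  apply listProdOnes hdm
  · -- the first d entries are 1
    intro t ht
    simp only [Function.comp_apply]
    have hval : ((extPerm hdm τ t : Fin m') : ℕ) = (t : ℕ) :=
      congrArg Fin.val (extPerm_lt hdm τ t ht)
    rw [hE', dif_neg, if_pos]
    · show (J.orderEmbOfFin hJ t : ℤ) = -(m' : ℤ) + ((extPerm hdm τ t : Fin m') : ℕ)
      rw [R1 t ht, hval]
    · rintro ⟨-, hj⟩
      replace hj : -(m : ℤ) ≤ -(m' : ℤ) + ((extPerm hdm τ t : Fin m') : ℕ) ∧
          -(m' : ℤ) + ((extPerm hdm τ t : Fin m') : ℕ) ≤ -1 := Finset.mem_Icc.mp hj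
      rw [hval] at hj
      omega
  · -- the remaining entries match the m-minor entries
    intro s p
    simp only [Function.comp_apply]
    have hval : ((extPerm hdm τ ⟨d + s.1, p⟩ : Fin m') : ℕ) = d + τ s :=
      extPerm_val_add hdm τ s p
    have hnd : ¬ ((⟨d + s.1, p⟩ : Fin m') : ℕ) < d := by simp
    have pd : ((⟨d + s.1, p⟩ : Fin m') : ℕ) - d < m := by
      have := s.isLt; simp only; omega
    have hrow : (J.orderEmbOfFin hJ ⟨d + s.1, p⟩ : ℤ) = (I.orderEmbOfFin hI s : ℤ) := by
      rw [R2 _ hnd pd]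
      exact congrArg (fun x : Fin m => (I.orderEmbOfFin hI x : ℤ)) (Fin.ext (by simp))
    have hImem := Finset.mem_Icc.mp (hIsub (Finset.orderEmbOfFin_mem I hI s))
    have hτs := (τ s).isLt
    rw [hE', dif_pos]
    · show av k m n _ _ = _
      unfold av
      congr 1
      · apply Subtype.ext
        show (J.orderEmbOfFin hJ ⟨d + s.1, p⟩ : ℤ) = (I.orderEmbOfFin hI s : ℤ)
        exact hrow
      · apply Subtype.ext
        show -(m' : ℤ) + ((extPerm hdm τ ⟨d + s.1, p⟩ : Fin m') : ℕ)
          = -(m : ℤ) + ((τ s : Fin m) : ℕ)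
        rw [hval]
        push_cast
        omega
    · constructor
      · show (J.orderEmbOfFin hJ ⟨d + s.1, p⟩ : ℤ) ∈ _
        rw [hrow, Finset.mem_Icc]
        exact hImem
      · show -(m' : ℤ) + ((extPerm hdm τ ⟨d + s.1, p⟩ : Fin m') : ℕ) ∈ _
        rw [hval, Finset.mem_Icc]
        constructor <;> push_cast <;> omega

end KeyLemmas


/-- `E^q_{(m',n',m,n)}` maps the quantum minor `D_J` to
`D_{J ∖ {-m',…,-m-1}}` when `J ⊇ {-m',…,-m-1}` and the remaining rows lie in
`{-m,…,n-1}`, and to `0` otherwise; consequently it restricts to a surjection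
`e^q : k_q[Δ_{m',n'}] → k_q[Δ_{m,n}]`. -/
theorem stmt13 (k : Type) [Field k] (m n m' n' : ℕ) (hm : 0 < m) (hn : 0 < n)
    (hmm : m ≤ m') (hnn : n ≤ n')
    (E : QMat k m' n' →ₐ[kq k] QMat k m n) (hE : EqProp k m n m' n' E) :
    (∀ (J : Finset ℤ) (hJ : J.card = m')
        (hJsub : J ⊆ Finset.Icc (-(m' : ℤ)) ((n' : ℤ) - 1)),
      (∀ (_ : Finset.Icc (-(m' : ℤ)) (-(m : ℤ) - 1) ⊆ J)
          (hIsub : J \ Finset.Icc (-(m' : ℤ)) (-(m : ℤ) - 1) ⊆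
            Finset.Icc (-(m : ℤ)) ((n : ℤ) - 1))
          (hI : (J \ Finset.Icc (-(m' : ℤ)) (-(m : ℤ) - 1)).card = m),
        E (qMinor k m' n' J hJ hJsub) =
          qMinor k m n (J \ Finset.Icc (-(m' : ℤ)) (-(m : ℤ) - 1)) hI hIsub) ∧
      (¬ (Finset.Icc (-(m' : ℤ)) (-(m : ℤ) - 1) ⊆ J ∧
          J \ Finset.Icc (-(m' : ℤ)) (-(m : ℤ) - 1) ⊆
            Finset.Icc (-(m : ℤ)) ((n : ℤ) - 1)) →
        E (qMinor k m' n' J hJ hJsub) = 0)) ∧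
    Subalgebra.map E (QDeltaSub k m' n') = QDeltaSub k m n := by
  constructor
  · intro J hJ hJsub
    constructor
    · intro hSJ hIsub hI
      exact gcase hmm hnn E hE J hJ hJsub hSJ hIsub hI
    · intro hbad
      exact zcase hmm E hE J hJ hJsub hbad
  · unfold QDeltaSub
    rw [AlgHom.map_adjoin]
    apply le_antisymm
    · apply Algebra.adjoin_le
      rintro x ⟨y, ⟨J, hJ, hJsub, rfl⟩, rfl⟩
      by_cases hgood : Finset.Icc (-(m' : ℤ)) (-(m : ℤ) - 1) ⊆ J ∧
          J \ Finset.Icc (-(m' : ℤ)) (-(m : ℤ) - 1) ⊆ Finset.Icc (-(m : ℤ)) ((n : ℤ) - 1)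
      · have hIc : (J \ Finset.Icc (-(m' : ℤ)) (-(m : ℤ) - 1)).card = m := by
          rw [Finset.card_sdiff_of_subset hgood.1, cardS_eq hmm, hJ]
          omega
        rw [gcase hmm hnn E hE J hJ hJsub hgood.1 hgood.2 hIc]
        exact Algebra.subset_adjoin ⟨_, hIc, hgood.2, rfl⟩
      · rw [zcase hmm E hE J hJ hJsub hgood]
        exact Subalgebra.zero_mem _
    · apply Algebra.adjoin_le
      rintro x ⟨I, hI, hsub, rfl⟩
      apply Algebra.subset_adjoin
      set S := Finset.Icc (-(m' : ℤ)) (-(m : ℤ) - 1) with hSdef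
      have hdisj : Disjoint I S := by
        rw [Finset.disjoint_left]
        intro a haI haS
        have h1 := Finset.mem_Icc.mp (hsub haI)
        have h2 := Finset.mem_Icc.mp haS
        omega
      have hJS : (I ∪ S) \ S = I := Finset.union_sdiff_cancel_right hdisj
      have hJ' : (I ∪ S).card = m' := by
        rw [Finset.card_union_of_disjoint hdisj, hI, cardS_eq hmm]
        omega
      have hJsub' : I ∪ S ⊆ Finset.Icc (-(m' : ℤ)) ((n' : ℤ) - 1) := by
        apply Finset.union_subset
        · intro a ha
          have h1 := Finset.mem_Icc.mp (hsub ha)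
          rw [Finset.mem_Icc]
          constructor <;> omega
        · intro a ha
          have h1 := Finset.mem_Icc.mp ha
          rw [Finset.mem_Icc]
          constructor <;> omega
      have hIsub' : (I ∪ S) \ S ⊆ Finset.Icc (-(m : ℤ)) ((n : ℤ) - 1) := by
        rw [hJS]; exact hsub
      have hI' : ((I ∪ S) \ S).card = m := by rw [hJS]; exact hI
      refine ⟨qMinor k m' n' (I ∪ S) hJ' hJsub', ⟨I ∪ S, hJ', hJsub', rfl⟩, ?_⟩
      rw [gcase hmm hnn E hE (I ∪ S) hJ' hJsub' Finset.subset_union_right hIsub' hI']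
      exact qMinor_congr hJS hI' hIsub' hI hsub

end
end

section
/- Let m' ≥ m and n' ≥ n be positive integers. The substitution g_{i,j} ↦ g_{i,j} for -m ≤ i,j ≤ n-1, g_{i,j} ↦ 1 for i = j outside {-m,...,n-1}, g_{i,j} ↦ 0 otherwise, induces a well-defined k_q-algebra homomorphism φ^q_{(m',n',m,n)} : k_q[SL_{m',n'}] → k_q[SL_{m,n}] (in particular it sends the quantum determinant of the large generic matrix to the quantum determinant of the small one), and φ^q is a morphism of Hopf algebras: (i) (φ^q ⊗ φ^q) ∘ Δ^q_{(m',n')} = Δ^q_{(m,n)} ∘ φ^q; (ii) ε^q_{(m,n)} ∘ φ^q = ε^q_{(m',n')}; (iii) φ^q ∘ S^q_{(m',n')} = S^q_{(m,n)} ∘ φ^q. -/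
set_option maxHeartbeats 2000000
set_option synthInstance.maxHeartbeats 400000

noncomputable section

open TensorProduct

/-- The square quantum matrix algebra on the indices `-m, ..., n-1`. -/
abbrev SqMat (k : Type) [Field k] (m n : ℕ) : Type := QMatG k (RowI m n) (RowI m n)

/-- `N = m + n`, the size of the square generic quantum matrix, as the cardinality of
the index set. -/
def NN (m n : ℕ) : ℕ := (Finset.Icc (-(m : ℤ)) ((n : ℤ) - 1)).card

/-- The quantum determinant of the generic square quantum matrix. -/
def sqDet (k : Type) [Field k] (m n : ℕ) : SqMat k m n :=
  qMinorG k (RowI m n) (RowI m n) (NN m n)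
    (fun t => (Finset.Icc (-(m : ℤ)) ((n : ℤ) - 1)).orderIsoOfFin rfl t)
    (fun t => (Finset.Icc (-(m : ℤ)) ((n : ℤ) - 1)).orderIsoOfFin rfl t)

/-- The quantum special linear group ring `k_q[SL_{m,n}]`: the quotient of the square
quantum matrix algebra by the two-sided ideal generated by `(quantum determinant) − 1`. -/
abbrev QSL (k : Type) [Field k] (m n : ℕ) : Type :=
  RingQuot (fun x y : SqMat k m n => x = sqDet k m n ∧ y = 1)

/-- The quotient map onto `k_q[SL_{m,n}]`. -/
def qslMk (k : Type) [Field k] (m n : ℕ) : SqMat k m n →ₐ[kq k] QSL k m n :=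
  RingQuot.mkAlgHom (kq k) _

/-- The generator `g_{i,j}` of `k_q[SL_{m,n}]`. -/
def qgSL (k : Type) [Field k] (m n : ℕ) (i j : RowI m n) : QSL k m n :=
  qslMk k m n (qgen k (RowI m n) (RowI m n) i j)

/-- `(-q)^z` for an integer exponent `z`. -/
def negqPow (k : Type) [Field k] (z : ℤ) : kq k :=
  (if Even z then 1 else -1) * LaurentPolynomial.T z

lemma card_erase_univ (m n : ℕ) (i : RowI m n) :
    ((Finset.univ : Finset (RowI m n)).erase i).card = NN m n - 1 := by
  simp [Finset.card_erase_of_mem, Finset.card_univ, NN]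

/-- The defining property of `φ^q_{(m',n',m,n)} : k_q[SL_{m',n'}] → k_q[SL_{m,n}]`
on the generators. -/
def phiqProp (k : Type) [Field k] (m n m' n' : ℕ)
    (φ : QSL k m' n' →ₐ[kq k] QSL k m n) : Prop :=
  ∀ i j : RowI m' n',
    φ (qgSL k m' n' i j) =
      if h : (i.1 ∈ Finset.Icc (-(m : ℤ)) ((n : ℤ) - 1)) ∧
          (j.1 ∈ Finset.Icc (-(m : ℤ)) ((n : ℤ) - 1)) then
        qgSL k m n ⟨i.1, h.1⟩ ⟨j.1, h.2⟩
      else if i.1 = j.1 then 1 else 0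

/-! ### List product lemmas -/

section ListLemmas
variable {ι : Type*} {M : Type*} [Monoid M]

lemma prod_map_sublist (g : ι → M) :
    ∀ {l₁ l₂ : List ι}, l₂.Sublist l₁ → l₁.Nodup →
      (∀ x ∈ l₁, x ∉ l₂ → g x = 1) → (l₁.map g).prod = (l₂.map g).prod := by
  intro l₁ l₂ h
  induction h with
  | slnil => simp
  | cons a h ih =>
    intro hnd hg
    have ha : a ∉ _ := (List.nodup_cons.1 hnd).1
    have h1 : g a = 1 := hg a List.mem_cons_self (fun hc => ha (h.subset hc))
    simp only [List.map_cons, List.prod_cons, h1, one_mul]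
    exact ih (List.nodup_cons.1 hnd).2 fun x hx hx2 => hg x (List.mem_cons_of_mem _ hx) hx2
  | cons_cons a h ih =>
    intro hnd hg
    have ha : a ∉ _ := (List.nodup_cons.1 hnd).1
    simp only [List.map_cons, List.prod_cons]
    congr 1
    exact ih (List.nodup_cons.1 hnd).2 fun x hx hx2 => by
      refine hg x (List.mem_cons_of_mem _ hx) fun hc => ?_
      rcases List.mem_cons.1 hc with rfl | hc
      · exact ha hx
      · exact hx2 hc

lemma ofFn_sublist_finRange {s s' : ℕ} (e : Fin s → Fin s') (he : StrictMono e) :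
    (List.ofFn e).Sublist (List.finRange s') := by
  have hfil : (List.finRange s').filter (fun t => decide (t ∈ Set.range e)) = List.ofFn e := by
    refine (fun (hp : List.Perm _ _) (h1 : List.Pairwise (· ≤ ·) _) (h2 : List.Pairwise (· ≤ ·) _) =>
      List.Perm.eq_of_pairwise' h1 h2 hp) ?_ ?_ ?_
    · apply List.perm_of_nodup_nodup_toFinset_eq
      · exact (List.nodup_finRange s').filter _
      · exact List.nodup_ofFn.2 he.injective
      · ext t
        simp only [List.toFinset_filter, Finset.mem_filter, List.mem_toFinset,
          List.mem_finRange, true_and, List.mem_ofFn, decide_eq_true_eq, Set.mem_range]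
    · exact (List.pairwise_le_finRange s').sublist List.filter_sublist |>.imp (fun h => h)
    · exact List.pairwise_ofFn.2 (fun i j hij => (he hij).le)
  exact hfil ▸ List.filter_sublist

lemma prod_ofFn_restrict {s s' : ℕ} (e : Fin s → Fin s') (he : StrictMono e)
    (g : Fin s' → M) (hg : ∀ t, t ∉ Set.range e → g t = 1) :
    (List.ofFn g).prod = (List.ofFn (g ∘ e)).prod := by
  have h1 : List.ofFn g = (List.finRange s').map g := List.ofFn_eq_map
  have h2 : List.ofFn (g ∘ e) = (List.ofFn e).map g := List.map_ofFn.symm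
  rw [h1, h2]
  exact prod_map_sublist g (ofFn_sublist_finRange e he) (List.nodup_finRange s')
    (fun x _ hx => hg x (fun ⟨a, ha⟩ => hx (ha ▸ List.mem_ofFn.2 ⟨a, rfl⟩)))

end ListLemmas

/-! ### Complement enumeration and inversion lemmas -/

section Compl

lemma exists_compl_enum {s s' : ℕ} (e : Fin s → Fin s') (he : StrictMono e) :
    ∃ eo : Fin (s' - s) → Fin s', StrictMono eo ∧ (∀ b, eo b ∉ Set.range e) ∧
      (∀ t, t ∉ Set.range e → ∃ b, eo b = t) := by
  set C : Finset (Fin s') := Finset.univ \ Finset.univ.image e with hC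
  have hcard : C.card = s' - s := by
    rw [Finset.card_sdiff_of_subset (Finset.subset_univ _), Finset.card_univ,
      Finset.card_image_of_injective _ he.injective, Finset.card_univ, Fintype.card_fin,
      Fintype.card_fin]
  have hmem : ∀ t, t ∈ C ↔ t ∉ Set.range e := by
    intro t
    simp [hC, Set.range]
  refine ⟨C.orderEmbOfFin hcard, (C.orderEmbOfFin hcard).strictMono, ?_, ?_⟩
  · intro b
    exact (hmem _).1 (Finset.orderEmbOfFin_mem _ _ _)
  · intro t ht
    have : t ∈ C := (hmem t).2 ht
    have : t ∈ Set.range (C.orderEmbOfFin hcard) := by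
      rw [Finset.range_orderEmbOfFin]; exact_mod_cast this
    exact this

lemma inversions_extend {s s' r : ℕ} (e f : Fin s → Fin s') (eo fo : Fin r → Fin s')
    (he : StrictMono e) (hf : StrictMono f) (heo : StrictMono eo) (hfo : StrictMono fo)
    (hcut1 : ∀ a b, e a < eo b → ∀ x, f x < fo b)
    (hcut2 : ∀ a b, eo b < e a → ∀ x, fo b < f x)
    (hpart : ∀ t, (∃ a, e a = t) ∨ (∃ b, eo b = t))
    (π : Equiv.Perm (Fin s)) (σ : Fin s' → Fin s')
    (hσe : ∀ a, σ (e a) = f (π a)) (hσo : ∀ b, σ (eo b) = fo b) :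
    inversions σ = inversions ⇑π := by
  unfold inversions
  have hset : (Finset.univ : Finset (Fin s' × Fin s')).filter
        (fun p => p.1 < p.2 ∧ σ p.2 < σ p.1)
      = ((Finset.univ : Finset (Fin s × Fin s)).filter
        (fun p => p.1 < p.2 ∧ π p.2 < π p.1)).image (Prod.map e e) := by
    ext ⟨t1, t2⟩
    simp only [Finset.mem_filter, Finset.mem_image, Finset.mem_univ, true_and, Prod.exists,
      Prod.map_apply, Prod.mk.injEq]
    constructor
    · rintro ⟨hlt, hinv⟩
      rcases hpart t1 with ⟨a1, rfl⟩ | ⟨b1, rfl⟩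
      · rcases hpart t2 with ⟨a2, rfl⟩ | ⟨b2, rfl⟩
        · refine ⟨a1, a2, ⟨he.lt_iff_lt.1 hlt, ?_⟩, rfl, rfl⟩
          rw [hσe, hσe] at hinv
          exact hf.lt_iff_lt.1 hinv
        · rw [hσe, hσo] at hinv
          exact absurd (hcut1 a1 b2 hlt (π a1)) (lt_asymm hinv)
      · rcases hpart t2 with ⟨a2, rfl⟩ | ⟨b2, rfl⟩
        · rw [hσo, hσe] at hinv
          exact absurd (hcut2 a2 b1 hlt (π a2)) (lt_asymm hinv)
        · rw [hσo, hσo] at hinv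
          exact absurd (hfo (heo.lt_iff_lt.1 hlt)) (lt_asymm hinv)
    · rintro ⟨a1, a2, ⟨hlt, hinv⟩, rfl, rfl⟩
      refine ⟨he hlt, ?_⟩
      rw [hσe, hσe]
      exact hf hinv
  rw [hset, Finset.card_image_of_injective _ (he.injective.prodMap he.injective)]

end Compl

/-! ### The core substitution-minor lemma -/

section Core

variable {k : Type} [Field k] {m n m' n' : ℕ}

/-- The generic substitution property. -/
def SubstG (k : Type) [Field k] (m n m' n' : ℕ) {A : Type} [Semiring A] [Algebra (kq k) A]
    (Ψ : SqMat k m' n' →ₐ[kq k] A) (G : RowI m n → RowI m n → A) : Prop :=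
  ∀ i j : RowI m' n',
    Ψ (qgen k (RowI m' n') (RowI m' n') i j) =
      if h : (i.1 ∈ Finset.Icc (-(m : ℤ)) ((n : ℤ) - 1)) ∧
          (j.1 ∈ Finset.Icc (-(m : ℤ)) ((n : ℤ) - 1)) then
        G ⟨i.1, h.1⟩ ⟨j.1, h.2⟩
      else if i.1 = j.1 then 1 else 0

theorem psi_minor_eq {A : Type} [Semiring A] [Algebra (kq k) A]
    (Ψ : SqMat k m' n' →ₐ[kq k] A) (G : RowI m n → RowI m n → A)
    (hΨ : SubstG k m n m' n' Ψ G)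
    {s s' : ℕ} (row col : Fin s' → RowI m' n') (rw cl : Fin s → RowI m n)
    (hrow : StrictMono row) (hcol : StrictMono col)
    (e f : Fin s → Fin s') (he : StrictMono e) (hf : StrictMono f)
    (hre : ∀ a, (row (e a)).1 = (rw a).1) (hcf : ∀ a, (col (f a)).1 = (cl a).1)
    (hrout : ∀ t, t ∉ Set.range e → (row t).1 ∉ Finset.Icc (-(m : ℤ)) ((n : ℤ) - 1))
    (hcout : ∀ t, t ∉ Set.range f → (col t).1 ∉ Finset.Icc (-(m : ℤ)) ((n : ℤ) - 1))
    (himg : ((Finset.univ \ Finset.univ.image e).image (fun t => (row t).1))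
          = ((Finset.univ \ Finset.univ.image f).image (fun t => (col t).1))) :
    Ψ (qMinorG k (RowI m' n') (RowI m' n') s' row col)
      = ∑ π : Equiv.Perm (Fin s), qCoeff k (inversions ⇑π) •
          (List.ofFn fun t => G (rw t) (cl (π t))).prod := by
  classical
  -- complement enumerations
  obtain ⟨eo, heo, heor, heos⟩ := exists_compl_enum e he
  obtain ⟨fo, hfo, hfor, hfos⟩ := exists_compl_enum f hf
  -- the outside values of rows and of columns agree
  have hD : ∀ b, (row (eo b)).1 = (col (fo b)).1 := by
    set D : Finset ℤ := (Finset.univ \ Finset.univ.image e).image (fun t => (row t).1) with hDdef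
    have hsd : ∀ t : Fin s', t ∈ Finset.univ \ Finset.univ.image e ↔ t ∉ Set.range e := by
      intro t; simp [Set.range]
    have hsdf : ∀ t : Fin s', t ∈ Finset.univ \ Finset.univ.image f ↔ t ∉ Set.range f := by
      intro t; simp [Set.range]
    have hcard : D.card = s' - s := by
      rw [hDdef, Finset.card_image_of_injOn
        (Set.InjOn.mono (Set.subset_univ _) (fun x _ y _ h => hrow.injective (Subtype.ext h))),
        Finset.card_sdiff_of_subset (Finset.subset_univ _), Finset.card_univ,
        Finset.card_image_of_injective _ he.injective, Finset.card_univ, Fintype.card_fin,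
        Fintype.card_fin]
    have h1 : (fun b => (row (eo b)).1) = D.orderEmbOfFin hcard := by
      apply Finset.orderEmbOfFin_unique
      · intro b
        exact Finset.mem_image_of_mem _ ((hsd _).2 (heor b))
      · intro b1 b2 hb
        exact Subtype.coe_lt_coe.2 (hrow (heo hb))
    have h2 : (fun b => (col (fo b)).1) = D.orderEmbOfFin hcard := by
      apply Finset.orderEmbOfFin_unique
      · intro b
        rw [himg]
        exact Finset.mem_image_of_mem _ ((hsdf _).2 (hfor b))
      · intro b1 b2 hb
        exact Subtype.coe_lt_coe.2 (hcol (hfo hb))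
    intro b
    exact (congrFun h1 b).trans (congrFun h2 b).symm
  -- partition facts
  have hpartE : ∀ t, (∃ a, e a = t) ∨ (∃ b, eo b = t) := by
    intro t
    by_cases h : t ∈ Set.range e
    · exact Or.inl h
    · exact Or.inr (heos t h)
  have hpartF : ∀ t, (∃ a, f a = t) ∨ (∃ b, fo b = t) := by
    intro t
    by_cases h : t ∈ Set.range f
    · exact Or.inl h
    · exact Or.inr (hfos t h)
  -- the bijections
  have hbijE : Function.Bijective (Sum.elim e eo) := by
    constructor
    · rintro (a1 | b1) (a2 | b2) h <;> simp only [Sum.elim_inl, Sum.elim_inr] at h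
      · exact congrArg Sum.inl (he.injective h)
      · exact absurd ⟨a1, h⟩ (heor b2)
      · exact absurd ⟨a2, h.symm⟩ (heor b1)
      · exact congrArg Sum.inr (heo.injective h)
    · intro t
      rcases hpartE t with ⟨a, ha⟩ | ⟨b, hb⟩
      · exact ⟨Sum.inl a, ha⟩
      · exact ⟨Sum.inr b, hb⟩
  have hbijF : Function.Bijective (Sum.elim f fo) := by
    constructor
    · rintro (a1 | b1) (a2 | b2) h <;> simp only [Sum.elim_inl, Sum.elim_inr] at h
      · exact congrArg Sum.inl (hf.injective h)
      · exact absurd ⟨a1, h⟩ (hfor b2)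
      · exact absurd ⟨a2, h.symm⟩ (hfor b1)
      · exact congrArg Sum.inr (hfo.injective h)
    · intro t
      rcases hpartF t with ⟨a, ha⟩ | ⟨b, hb⟩
      · exact ⟨Sum.inl a, ha⟩
      · exact ⟨Sum.inr b, hb⟩
  set E1 : (Fin s ⊕ Fin (s' - s)) ≃ Fin s' := Equiv.ofBijective _ hbijE with hE1
  set F1 : (Fin s ⊕ Fin (s' - s)) ≃ Fin s' := Equiv.ofBijective _ hbijF with hF1
  set T : Equiv.Perm (Fin s) → Equiv.Perm (Fin s') :=
    fun π => (E1.symm.trans (Equiv.sumCongr π (Equiv.refl _))).trans F1 with hT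
  have hTe : ∀ π a, T π (e a) = f (π a) := by
    intro π a
    have h1 : E1.symm (e a) = Sum.inl a := by
      rw [Equiv.symm_apply_eq, hE1]; rfl
    simp only [hT, Equiv.trans_apply, h1, Equiv.sumCongr_apply, Sum.map_inl]
    rw [hF1]; rfl
  have hTo : ∀ π b, T π (eo b) = fo b := by
    intro π b
    have h1 : E1.symm (eo b) = Sum.inr b := by
      rw [Equiv.symm_apply_eq, hE1]; rfl
    simp only [hT, Equiv.trans_apply, h1, Equiv.sumCongr_apply, Sum.map_inr]
    rw [hF1]; rfl
  have hTinj : Function.Injective T := by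
    intro π1 π2 h
    apply Equiv.ext
    intro a
    have := congrArg (fun σ : Equiv.Perm (Fin s') => σ (e a)) h
    simp only [hTe] at this
    exact hf.injective this
  -- push Ψ inside
  have hpush : Ψ (qMinorG k (RowI m' n') (RowI m' n') s' row col)
      = ∑ σ : Equiv.Perm (Fin s'), qCoeff k (inversions ⇑σ) •
          (List.ofFn fun t => Ψ (qgen k (RowI m' n') (RowI m' n') (row t) (col (σ t)))).prod := by
    unfold qMinorG
    rw [map_sum]
    refine Finset.sum_congr rfl fun σ _ => ?_
    rw [map_smul, map_list_prod, List.map_ofFn]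
    rfl
  rw [hpush]
  -- the summand
  set h : Equiv.Perm (Fin s') → A := fun σ => qCoeff k (inversions ⇑σ) •
      (List.ofFn fun t => Ψ (qgen k (RowI m' n') (RowI m' n') (row t) (col (σ t)))).prod with hh
  -- zero off the range of T
  have hzero : ∀ σ : Equiv.Perm (Fin s'), σ ∉ Set.range T → h σ = 0 := by
    intro σ hσ
    by_contra hne
    -- every factor is nonzero, hence structure
    have hfac : ∀ t, Ψ (qgen k (RowI m' n') (RowI m' n') (row t) (col (σ t))) ≠ 0 := by
      intro t h0
      apply hne
      simp only [hh]
      have : (0 : A) ∈ List.ofFn fun t => Ψ (qgen k (RowI m' n') (RowI m' n') (row t) (col (σ t))) := by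
        rw [List.mem_ofFn]
        exact ⟨t, h0⟩
      rw [List.prod_eq_zero this, smul_zero]
    have hstruct : ∀ t, ((row t).1 ∈ Finset.Icc (-(m : ℤ)) ((n : ℤ) - 1) ∧
        (col (σ t)).1 ∈ Finset.Icc (-(m : ℤ)) ((n : ℤ) - 1)) ∨ (row t).1 = (col (σ t)).1 := by
      intro t
      have := hfac t
      rw [hΨ] at this
      by_cases hc : (row t).1 ∈ Finset.Icc (-(m : ℤ)) ((n : ℤ) - 1) ∧
          (col (σ t)).1 ∈ Finset.Icc (-(m : ℤ)) ((n : ℤ) - 1)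
      · exact Or.inl hc
      · rw [dif_neg hc] at this
        by_cases hv : (row t).1 = (col (σ t)).1
        · exact Or.inr hv
        · rw [if_neg hv] at this
          exact absurd rfl this
    -- σ fixes the outside part
    have hσo : ∀ b, σ (eo b) = fo b := by
      intro b
      rcases hstruct (eo b) with ⟨hsm, _⟩ | hv
      · exact absurd hsm (hrout _ (heor b))
      · have : col (σ (eo b)) = col (fo b) := Subtype.ext (hv.symm.trans (hD b))
        exact hcol.injective this
    -- σ maps the e-part into the f-part
    have hσe : ∀ a, ∃ x, f x = σ (e a) := by
      intro a
      rcases hpartF (σ (e a)) with ⟨x, hx⟩ | ⟨b, hb⟩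
      · exact ⟨x, hx⟩
      · exfalso
        have : σ (eo b) = σ (e a) := by rw [hσo b, hb]
        have := σ.injective this
        exact heor b ⟨a, this.symm⟩
    choose π₀ hπ₀ using hσe
    have hπinj : Function.Injective π₀ := by
      intro a1 a2 hx
      have : σ (e a1) = σ (e a2) := by rw [← hπ₀, ← hπ₀, hx]
      exact he.injective (σ.injective this)
    have hπbij := Finite.injective_iff_bijective.1 hπinj
    apply hσ
    refine ⟨Equiv.ofBijective π₀ hπbij, ?_⟩
    apply Equiv.ext
    intro t
    rcases hpartE t with ⟨a, rfl⟩ | ⟨b, rfl⟩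
    · rw [hTe]
      exact hπ₀ a
    · rw [hTo, hσo]
  -- reduce the sum to the image of T
  have hsum : ∑ σ : Equiv.Perm (Fin s'), h σ = ∑ π : Equiv.Perm (Fin s), h (T π) := by
    have h1 : ∑ σ ∈ Finset.univ.image T, h σ = ∑ π : Equiv.Perm (Fin s), h (T π) :=
      Finset.sum_image (fun π _ π' _ hp => hTinj hp)
    rw [← h1]
    apply (Finset.sum_subset (Finset.subset_univ _) ?_).symm
    intro σ _ hσ
    apply hzero
    intro ⟨π, hπ⟩
    exact hσ (Finset.mem_image.2 ⟨π, Finset.mem_univ _, hπ⟩)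
  rw [hsum]
  -- identify each term
  refine Finset.sum_congr rfl fun π _ => ?_
  have hinv : inversions ⇑(T π) = inversions ⇑π := by
    apply inversions_extend e f eo fo he hf heo hfo ?_ ?_ hpartE π _ (hTe π) (hTo π)
    · -- hcut1 : e a < eo b → ∀ x, f x < fo b
      intro a b hab x
      have hv1 : (rw a).1 < (row (eo b)).1 := by
        rw [← hre a]; exact Subtype.coe_lt_coe.2 (hrow hab)
      have hout := hrout (eo b) (heor b)
      have hmem1 := (rw a).2
      have hmem2 := (cl x).2
      have hmemb := (row (eo b)).2
      simp only [Finset.mem_Icc] at hmem1 hmem2 hmemb hout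
      have hvx : (cl x).1 < (row (eo b)).1 := by omega
      have hcc : (col (f x)).1 < (col (fo b)).1 := by
        rw [hcf, ← hD]; exact hvx
      exact hcol.lt_iff_lt.1 (Subtype.coe_lt_coe.1 hcc)
    · -- hcut2 : eo b < e a → ∀ x, fo b < f x
      intro a b hab x
      have hv1 : (row (eo b)).1 < (rw a).1 := by
        rw [← hre a]; exact Subtype.coe_lt_coe.2 (hrow hab)
      have hout := hrout (eo b) (heor b)
      have hmem1 := (rw a).2
      have hmem2 := (cl x).2
      have hmemb := (row (eo b)).2
      simp only [Finset.mem_Icc] at hmem1 hmem2 hmemb hout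
      have hvx : (row (eo b)).1 < (cl x).1 := by omega
      have hcc : (col (fo b)).1 < (col (f x)).1 := by
        rw [hcf, ← hD]; exact hvx
      exact hcol.lt_iff_lt.1 (Subtype.coe_lt_coe.1 hcc)
  simp only [hh]
  rw [hinv]
  congr 1
  have h1 : ∀ t, t ∉ Set.range e →
      Ψ (qgen k (RowI m' n') (RowI m' n') (row t) (col (T π t))) = 1 := by
    intro t ht
    obtain ⟨b, rfl⟩ := heos t ht
    rw [hTo, hΨ, dif_neg, if_pos (hD b)]
    intro hc
    exact (hrout _ ht) hc.1
  rw [prod_ofFn_restrict e he _ h1]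
  congr 1
  have h2 : ∀ a : Fin s,
      ((fun t => Ψ (qgen k (RowI m' n') (RowI m' n') (row t) (col (T π t)))) ∘ e) a
        = G (rw a) (cl (π a)) := by
    intro a
    simp only [Function.comp_apply]
    rw [hTe, hΨ]
    have hc1 : (row (e a)).1 ∈ Finset.Icc (-(m : ℤ)) ((n : ℤ) - 1) := hre a ▸ (rw a).2
    have hc2 : (col (f (π a))).1 ∈ Finset.Icc (-(m : ℤ)) ((n : ℤ) - 1) := hcf (π a) ▸ (cl (π a)).2
    rw [dif_pos ⟨hc1, hc2⟩]
    congr 1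
    · exact Subtype.ext (hre a)
    · exact Subtype.ext (hcf (π a))
  exact congrArg List.ofFn (funext h2)

end Core

section Zero
variable {k : Type} [Field k] {m n m' n' : ℕ}

theorem psi_minor_zero_row {A : Type} [Semiring A] [Algebra (kq k) A]
    (Ψ : SqMat k m' n' →ₐ[kq k] A) (G : RowI m n → RowI m n → A)
    (hΨ : SubstG k m n m' n' Ψ G) {s' : ℕ} (row col : Fin s' → RowI m' n')
    (t0 : Fin s') (h1 : (row t0).1 ∉ Finset.Icc (-(m : ℤ)) ((n : ℤ) - 1))
    (h2 : ∀ t', (col t').1 ≠ (row t0).1) :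
    Ψ (qMinorG k (RowI m' n') (RowI m' n') s' row col) = 0 := by
  unfold qMinorG
  rw [map_sum]
  apply Finset.sum_eq_zero
  intro σ _
  rw [map_smul, map_list_prod, List.map_ofFn]
  have hz : (0 : A) ∈ List.ofFn (⇑Ψ ∘ fun t => qgen k (RowI m' n') (RowI m' n') (row t) (col (σ t))) := by
    rw [List.mem_ofFn]
    refine ⟨t0, ?_⟩
    simp only [Function.comp_apply]
    rw [hΨ, dif_neg (fun hc => h1 hc.1), if_neg (fun hv => h2 (σ t0) hv.symm)]
  rw [List.prod_eq_zero hz, smul_zero]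

theorem psi_minor_zero_col {A : Type} [Semiring A] [Algebra (kq k) A]
    (Ψ : SqMat k m' n' →ₐ[kq k] A) (G : RowI m n → RowI m n → A)
    (hΨ : SubstG k m n m' n' Ψ G) {s' : ℕ} (row col : Fin s' → RowI m' n')
    (t0 : Fin s') (h1 : (col t0).1 ∉ Finset.Icc (-(m : ℤ)) ((n : ℤ) - 1))
    (h2 : ∀ t, (row t).1 ≠ (col t0).1) :
    Ψ (qMinorG k (RowI m' n') (RowI m' n') s' row col) = 0 := by
  unfold qMinorG
  rw [map_sum]
  apply Finset.sum_eq_zero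
  intro σ _
  rw [map_smul, map_list_prod, List.map_ofFn]
  have hz : (0 : A) ∈ List.ofFn (⇑Ψ ∘ fun t => qgen k (RowI m' n') (RowI m' n') (row t) (col (σ t))) := by
    rw [List.mem_ofFn]
    refine ⟨σ.symm t0, ?_⟩
    simp only [Function.comp_apply, Equiv.apply_symm_apply]
    rw [hΨ, dif_neg (fun hc => h1 hc.2), if_neg (fun hv => h2 (σ.symm t0) hv)]
  rw [List.prod_eq_zero hz, smul_zero]

end Zero

/-! ### Relations between generators, and the substitution homomorphism -/

section PhiConstruction
variable (k : Type) [Field k] {R C : Type} [LinearOrder R] [LinearOrder C]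

lemma qgen_col (i i' : R) (j : C) (h : i < i') :
    qgen k R C i j * qgen k R C i' j = qInv k • (qgen k R C i' j * qgen k R C i j) := by
  have := RingQuot.mkAlgHom_rel (kq k) (QMRel.col (k := k) i i' j h)
  simpa only [map_mul, map_smul, qgen] using this

lemma qgen_row (i : R) (j j' : C) (h : j < j') :
    qgen k R C i j * qgen k R C i j' = qInv k • (qgen k R C i j' * qgen k R C i j) := by
  have := RingQuot.mkAlgHom_rel (kq k) (QMRel.row (k := k) i j j' h)
  simpa only [map_mul, map_smul, qgen] using this

lemma qgen_comm (i i' : R) (j j' : C) (h1 : i < i') (h2 : j' < j) :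
    qgen k R C i j * qgen k R C i' j' = qgen k R C i' j' * qgen k R C i j := by
  have := RingQuot.mkAlgHom_rel (kq k) (QMRel.comm (k := k) i i' j j' h1 h2)
  simpa only [map_mul, qgen] using this

lemma qgen_qcomm (i i' : R) (j j' : C) (h1 : i < i') (h2 : j < j') :
    qgen k R C i j * qgen k R C i' j' - qgen k R C i' j' * qgen k R C i j
      = (qInv k - qParam k) • (qgen k R C i' j * qgen k R C i j') := by
  have := RingQuot.mkAlgHom_rel (kq k) (QMRel.qcomm (k := k) i i' j j' h1 h2)
  simpa only [map_mul, map_sub, map_smul, qgen] using this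

end PhiConstruction

section Subst
variable (k : Type) [Field k] (m n m' n' : ℕ)

/-- The substitution function on generators. -/
def substFun : RowI m' n' × RowI m' n' → SqMat k m n := fun p =>
  if h : (p.1.1 ∈ Finset.Icc (-(m : ℤ)) ((n : ℤ) - 1)) ∧
      (p.2.1 ∈ Finset.Icc (-(m : ℤ)) ((n : ℤ) - 1)) then
    qgen k (RowI m n) (RowI m n) ⟨p.1.1, h.1⟩ ⟨p.2.1, h.2⟩
  else if p.1.1 = p.2.1 then 1 else 0

variable {k m n m' n'}

lemma substFun_eq_zero {p : RowI m' n' × RowI m' n'}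
    (h1 : ¬((p.1.1 ∈ Finset.Icc (-(m : ℤ)) ((n : ℤ) - 1)) ∧
      (p.2.1 ∈ Finset.Icc (-(m : ℤ)) ((n : ℤ) - 1)))) (h2 : p.1.1 ≠ p.2.1) :
    substFun k m n m' n' p = 0 := by
  rw [substFun, dif_neg h1, if_neg h2]

lemma substFun_eq_one {p : RowI m' n' × RowI m' n'}
    (h1 : ¬((p.1.1 ∈ Finset.Icc (-(m : ℤ)) ((n : ℤ) - 1)) ∧
      (p.2.1 ∈ Finset.Icc (-(m : ℤ)) ((n : ℤ) - 1)))) (h2 : p.1.1 = p.2.1) :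
    substFun k m n m' n' p = 1 := by
  rw [substFun, dif_neg h1, if_pos h2]

lemma substFun_scalar {p : RowI m' n' × RowI m' n'}
    (h1 : ¬((p.1.1 ∈ Finset.Icc (-(m : ℤ)) ((n : ℤ) - 1)) ∧
      (p.2.1 ∈ Finset.Icc (-(m : ℤ)) ((n : ℤ) - 1)))) :
    substFun k m n m' n' p = 0 ∨ substFun k m n m' n' p = 1 := by
  by_cases h2 : p.1.1 = p.2.1
  · exact Or.inr (substFun_eq_one h1 h2)
  · exact Or.inl (substFun_eq_zero h1 h2)

theorem substFun_rel : ∀ ⦃x y : FreeAlgebra (kq k) (RowI m' n' × RowI m' n')⦄,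
    QMRel k (RowI m' n') (RowI m' n') x y →
    FreeAlgebra.lift (kq k) (substFun k m n m' n') x
      = FreeAlgebra.lift (kq k) (substFun k m n m' n') y := by
  intro x y h
  have hIcc : ∀ x : ℤ, x ∈ Finset.Icc (-(m : ℤ)) ((n : ℤ) - 1) ↔ -(m : ℤ) ≤ x ∧ x ≤ (n : ℤ) - 1 :=
    fun x => Finset.mem_Icc
  induction h with
  | col i i' j h =>
    simp only [map_mul, map_smul, FreeAlgebra.lift_ι_apply]
    by_cases hc : i.1 ∈ Finset.Icc (-(m : ℤ)) ((n : ℤ) - 1)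
        ∧ i'.1 ∈ Finset.Icc (-(m : ℤ)) ((n : ℤ) - 1) ∧ j.1 ∈ Finset.Icc (-(m : ℤ)) ((n : ℤ) - 1)
    · rw [substFun, dif_pos (show _ ∧ _ from ⟨hc.1, hc.2.2⟩),
        substFun, dif_pos (show _ ∧ _ from ⟨hc.2.1, hc.2.2⟩)]
      exact qgen_col k _ _ _ (Subtype.mk_lt_mk.2 (Subtype.coe_lt_coe.2 h))
    · have hz : substFun k m n m' n' (i, j) = 0 ∨ substFun k m n m' n' (i', j) = 0 := by
        have hlt : i.1 < i'.1 := Subtype.coe_lt_coe.2 h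
        by_cases h1 : i.1 ∈ Finset.Icc (-(m : ℤ)) ((n : ℤ) - 1)
            ∧ j.1 ∈ Finset.Icc (-(m : ℤ)) ((n : ℤ) - 1)
        · refine Or.inr (substFun_eq_zero (fun hc2 => hc ⟨h1.1, hc2.1, h1.2⟩) ?_)
          show i'.1 ≠ j.1
          intro hv
          exact hc ⟨h1.1, hv ▸ h1.2, h1.2⟩
        · by_cases h2 : i.1 = j.1
          · refine Or.inr (substFun_eq_zero ?_ ?_)
            · intro hc2
              exact h1 ⟨h2 ▸ hc2.2, hc2.2⟩
            · show i'.1 ≠ j.1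
              omega
          · exact Or.inl (substFun_eq_zero h1 h2)
      rcases hz with hz | hz
      · rw [hz, zero_mul, mul_zero, smul_zero]
      · rw [hz, zero_mul, mul_zero, smul_zero]
  | row i j j' h =>
    simp only [map_mul, map_smul, FreeAlgebra.lift_ι_apply]
    by_cases hc : i.1 ∈ Finset.Icc (-(m : ℤ)) ((n : ℤ) - 1)
        ∧ j.1 ∈ Finset.Icc (-(m : ℤ)) ((n : ℤ) - 1) ∧ j'.1 ∈ Finset.Icc (-(m : ℤ)) ((n : ℤ) - 1)
    · rw [substFun, dif_pos (show _ ∧ _ from ⟨hc.1, hc.2.1⟩),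
        substFun, dif_pos (show _ ∧ _ from ⟨hc.1, hc.2.2⟩)]
      exact qgen_row k _ _ _ (Subtype.mk_lt_mk.2 (Subtype.coe_lt_coe.2 h))
    · have hz : substFun k m n m' n' (i, j) = 0 ∨ substFun k m n m' n' (i, j') = 0 := by
        have hlt : j.1 < j'.1 := Subtype.coe_lt_coe.2 h
        by_cases h1 : i.1 ∈ Finset.Icc (-(m : ℤ)) ((n : ℤ) - 1)
            ∧ j.1 ∈ Finset.Icc (-(m : ℤ)) ((n : ℤ) - 1)
        · refine Or.inr (substFun_eq_zero (fun hc2 => hc ⟨h1.1, h1.2, hc2.2⟩) ?_)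
          show i.1 ≠ j'.1
          intro hv
          exact hc ⟨h1.1, h1.2, hv ▸ h1.1⟩
        · by_cases h2 : i.1 = j.1
          · refine Or.inr (substFun_eq_zero ?_ ?_)
            · intro hc2
              exact h1 ⟨hc2.1, h2 ▸ hc2.1⟩
            · show i.1 ≠ j'.1
              omega
          · exact Or.inl (substFun_eq_zero h1 h2)
      rcases hz with hz | hz
      · rw [hz, zero_mul, mul_zero, smul_zero]
      · rw [hz, zero_mul, mul_zero, smul_zero]
  | comm i i' j j' h1 h2 =>
    simp only [map_mul, FreeAlgebra.lift_ι_apply]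
    by_cases hc : (i.1 ∈ Finset.Icc (-(m : ℤ)) ((n : ℤ) - 1)
          ∧ j.1 ∈ Finset.Icc (-(m : ℤ)) ((n : ℤ) - 1))
        ∧ (i'.1 ∈ Finset.Icc (-(m : ℤ)) ((n : ℤ) - 1)
          ∧ j'.1 ∈ Finset.Icc (-(m : ℤ)) ((n : ℤ) - 1))
    · rw [substFun, dif_pos hc.1, substFun, dif_pos hc.2]
      exact qgen_comm k _ _ _ _ (Subtype.mk_lt_mk.2 (Subtype.coe_lt_coe.2 h1))
        (Subtype.mk_lt_mk.2 (Subtype.coe_lt_coe.2 h2))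
    · rcases not_and_or.1 hc with hna | hna
      · rcases substFun_scalar (k := k) (p := (i, j)) hna with hs | hs
        · rw [hs, zero_mul, mul_zero]
        · rw [hs, one_mul, mul_one]
      · rcases substFun_scalar (k := k) (p := (i', j')) hna with hs | hs
        · rw [hs, mul_zero, zero_mul]
        · rw [hs, mul_one, one_mul]
  | qcomm i i' j j' h1 h2 =>
    simp only [map_mul, map_sub, map_smul, FreeAlgebra.lift_ι_apply]
    by_cases hc : (i.1 ∈ Finset.Icc (-(m : ℤ)) ((n : ℤ) - 1)
          ∧ j.1 ∈ Finset.Icc (-(m : ℤ)) ((n : ℤ) - 1))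
        ∧ (i'.1 ∈ Finset.Icc (-(m : ℤ)) ((n : ℤ) - 1)
          ∧ j'.1 ∈ Finset.Icc (-(m : ℤ)) ((n : ℤ) - 1))
    · rw [substFun, dif_pos hc.1, substFun, dif_pos hc.2, substFun,
        dif_pos (show _ ∧ _ from ⟨hc.2.1, hc.1.2⟩), substFun,
        dif_pos (show _ ∧ _ from ⟨hc.1.1, hc.2.2⟩)]
      exact qgen_qcomm k _ _ _ _ (Subtype.mk_lt_mk.2 (Subtype.coe_lt_coe.2 h1))
        (Subtype.mk_lt_mk.2 (Subtype.coe_lt_coe.2 h2))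
    · have hlt1 : i.1 < i'.1 := Subtype.coe_lt_coe.2 h1
      have hlt2 : j.1 < j'.1 := Subtype.coe_lt_coe.2 h2
      have hcommL : substFun k m n m' n' (i, j) * substFun k m n m' n' (i', j')
          - substFun k m n m' n' (i', j') * substFun k m n m' n' (i, j) = 0 := by
        rcases not_and_or.1 hc with hna | hna
        · rcases substFun_scalar (k := k) (p := (i, j)) hna with hs | hs
          · rw [hs, zero_mul, mul_zero]
            exact sub_self (G := SqMat k m n) _
          · rw [hs, one_mul, mul_one]
            exact sub_self (G := SqMat k m n) _
        · rcases substFun_scalar (k := k) (p := (i', j')) hna with hs | hs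
          · rw [hs, zero_mul, mul_zero]
            exact sub_self (G := SqMat k m n) _
          · rw [hs, one_mul, mul_one]
            exact sub_self (G := SqMat k m n) _
      have hzR : substFun k m n m' n' (i', j) = 0 ∨ substFun k m n m' n' (i, j') = 0 := by
        by_cases hw : i'.1 ∈ Finset.Icc (-(m : ℤ)) ((n : ℤ) - 1)
            ∧ j.1 ∈ Finset.Icc (-(m : ℤ)) ((n : ℤ) - 1)
        · by_cases hx : i.1 ∈ Finset.Icc (-(m : ℤ)) ((n : ℤ) - 1)
              ∧ j'.1 ∈ Finset.Icc (-(m : ℤ)) ((n : ℤ) - 1)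
          · exact absurd ⟨⟨hx.1, hw.2⟩, ⟨hw.1, hx.2⟩⟩ hc
          · refine Or.inr (substFun_eq_zero hx ?_)
            show i.1 ≠ j'.1
            intro hv
            have hm1 : -(m : ℤ) ≤ i'.1 ∧ i'.1 ≤ (n : ℤ) - 1 := (hIcc _).1 hw.1
            have hm2 : -(m : ℤ) ≤ j.1 ∧ j.1 ≤ (n : ℤ) - 1 := (hIcc _).1 hw.2
            have hni : i.1 ∈ Finset.Icc (-(m : ℤ)) ((n : ℤ) - 1) := by
              rw [hIcc]; omega
            exact hx ⟨hni, hv ▸ hni⟩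
        · by_cases hv : i'.1 = j.1
          · refine Or.inr (substFun_eq_zero ?_ ?_)
            · intro hx
              apply hw
              have hm1 : -(m : ℤ) ≤ i.1 ∧ i.1 ≤ (n : ℤ) - 1 := (hIcc _).1 hx.1
              have hm2 : -(m : ℤ) ≤ j'.1 ∧ j'.1 ≤ (n : ℤ) - 1 := (hIcc _).1 hx.2
              constructor <;> rw [hIcc] <;> omega
            · show i.1 ≠ j'.1
              omega
          · exact Or.inl (substFun_eq_zero hw hv)
      rw [hcommL]
      rcases hzR with hz | hz
      · rw [hz, zero_mul, smul_zero]
      · rw [hz, mul_zero, smul_zero]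

/-- The substitution homomorphism on the square quantum matrix algebras. -/
def bigPhi : SqMat k m' n' →ₐ[kq k] SqMat k m n :=
  RingQuot.liftAlgHom (kq k) ⟨FreeAlgebra.lift (kq k) (substFun k m n m' n'), substFun_rel⟩

theorem bigPhi_gen : SubstG k m n m' n' (bigPhi (k := k) (m := m) (n := n) (m' := m') (n' := n'))
    (qgen k (RowI m n) (RowI m n)) := by
  intro i j
  rw [bigPhi, qgen, RingQuot.liftAlgHom_mkAlgHom_apply, FreeAlgebra.lift_ι_apply]
  rfl

end Subst

/-! ### Building the index embeddings from finsets -/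

section Build
variable {k : Type} [Field k] {m n m' n' : ℕ}

/-- The inclusion of small indices into big indices. -/
def embR (hmm : m ≤ m') (hnn : n ≤ n') (x : RowI m n) : RowI m' n' :=
  ⟨x.1, by
    have := x.2
    simp only [Finset.mem_Icc] at *
    omega⟩

lemma embR_strictMono (hmm : m ≤ m') (hnn : n ≤ n') : StrictMono (embR hmm hnn) :=
  fun _ _ h => Subtype.mk_lt_mk.2 (Subtype.coe_lt_coe.2 h)

lemma range_eq_of_strictMono {α : Type*} [LinearOrder α] {s : ℕ} {T : Finset α}
    (hT : T.card = s) {f : Fin s → α} (hf : StrictMono f) (hmem : ∀ t, f t ∈ T) :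
    ∀ x ∈ T, ∃ t, f t = x := by
  have : f = T.orderEmbOfFin hT := Finset.orderEmbOfFin_unique hT hmem hf
  intro x hx
  have : x ∈ Set.range f := by
    rw [this, Finset.range_orderEmbOfFin]
    exact_mod_cast hx
  exact this

lemma build_e (hmm : m ≤ m') (hnn : n ≤ n') {s s' : ℕ}
    (row : Fin s' → RowI m' n') (hrow : StrictMono row)
    (rw : Fin s → RowI m n) (hrw : StrictMono rw)
    (T : Finset (RowI m' n')) (hT : T.card = s') (hrmem : ∀ t, row t ∈ T)
    (Ts : Finset (RowI m n)) (hTs : Ts.card = s) (hrwmem : ∀ a, rw a ∈ Ts)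
    (hcomp : ∀ x : RowI m n, embR hmm hnn x ∈ T ↔ x ∈ Ts) :
    ∃ e : Fin s → Fin s', StrictMono e ∧ (∀ a, (row (e a)).1 = (rw a).1) ∧
      (∀ t, t ∉ Set.range e → (row t).1 ∉ Finset.Icc (-(m : ℤ)) ((n : ℤ) - 1)) ∧
      ((Finset.univ \ Finset.univ.image e).image (fun t => (row t).1)
        = (T.filter (fun x => x.1 ∉ Finset.Icc (-(m : ℤ)) ((n : ℤ) - 1))).image
            (fun x => x.1)) := by
  classical
  have hrsurj := range_eq_of_strictMono hT hrow hrmem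
  have hrwsurj := range_eq_of_strictMono hTs hrw hrwmem
  have hex : ∀ a : Fin s, ∃ t, row t = embR hmm hnn (rw a) := fun a =>
    hrsurj _ ((hcomp (rw a)).2 (hrwmem a))
  choose e he using hex
  have hre : ∀ a, (row (e a)).1 = (rw a).1 := fun a => by rw [he a]; rfl
  have hemono : StrictMono e := by
    intro a b hab
    apply hrow.lt_iff_lt.1
    rw [he a, he b]
    exact embR_strictMono hmm hnn (hrw hab)
  have hrout : ∀ t, t ∉ Set.range e → (row t).1 ∉ Finset.Icc (-(m : ℤ)) ((n : ℤ) - 1) := by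
    intro t ht hsm
    apply ht
    set x : RowI m n := ⟨(row t).1, hsm⟩ with hx
    have hxT : embR hmm hnn x ∈ T := by
      have : embR hmm hnn x = row t := Subtype.ext rfl
      rw [this]
      exact hrmem t
    obtain ⟨a, ha⟩ := hrwsurj x ((hcomp x).1 hxT)
    refine ⟨a, ?_⟩
    apply hrow.injective
    rw [he a, ha]
    exact Subtype.ext rfl
  refine ⟨e, hemono, hre, hrout, ?_⟩
  ext c
  simp only [Finset.mem_image, Finset.mem_sdiff, Finset.mem_univ, true_and, Finset.mem_filter]
  constructor
  · rintro ⟨t, ht, rfl⟩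
    have ht' : t ∉ Set.range e := by
      rintro ⟨a, rfl⟩
      exact ht ⟨a, rfl⟩
    exact ⟨row t, ⟨hrmem t, hrout t ht'⟩, rfl⟩
  · rintro ⟨x, ⟨hxT, hxout⟩, rfl⟩
    obtain ⟨t, rfl⟩ := hrsurj x hxT
    refine ⟨t, ?_, rfl⟩
    rintro ⟨a, rfl⟩
    exact hxout (hre a ▸ (rw a).2)

/-- The main instantiation: under matching finset data the substitution sends
a big quantum minor to the corresponding small quantum minor expression. -/
theorem subst_minor_match {A : Type} [Semiring A] [Algebra (kq k) A]
    (Ψ : SqMat k m' n' →ₐ[kq k] A) (G : RowI m n → RowI m n → A)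
    (hΨ : SubstG k m n m' n' Ψ G) (hmm : m ≤ m') (hnn : n ≤ n')
    {s s' : ℕ} (row col : Fin s' → RowI m' n') (rw cl : Fin s → RowI m n)
    (hrow : StrictMono row) (hcol : StrictMono col)
    (hrw : StrictMono rw) (hcl : StrictMono cl)
    (T U : Finset (RowI m' n')) (hT : T.card = s') (hU : U.card = s')
    (hrmem : ∀ t, row t ∈ T) (hcmem : ∀ t, col t ∈ U)
    (Ts Us : Finset (RowI m n)) (hTs : Ts.card = s) (hUs : Us.card = s)
    (hrwmem : ∀ a, rw a ∈ Ts) (hclmem : ∀ a, cl a ∈ Us)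
    (hcompT : ∀ x : RowI m n, embR hmm hnn x ∈ T ↔ x ∈ Ts)
    (hcompU : ∀ x : RowI m n, embR hmm hnn x ∈ U ↔ x ∈ Us)
    (hfil : T.filter (fun x => x.1 ∉ Finset.Icc (-(m : ℤ)) ((n : ℤ) - 1))
          = U.filter (fun x => x.1 ∉ Finset.Icc (-(m : ℤ)) ((n : ℤ) - 1))) :
    Ψ (qMinorG k (RowI m' n') (RowI m' n') s' row col)
      = ∑ π : Equiv.Perm (Fin s), qCoeff k (inversions ⇑π) •
          (List.ofFn fun t => G (rw t) (cl (π t))).prod := by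
  obtain ⟨e, he, hre, hrout, himgr⟩ :=
    build_e hmm hnn row hrow rw hrw T hT hrmem Ts hTs hrwmem hcompT
  obtain ⟨f, hf, hcf, hcout, himgc⟩ :=
    build_e hmm hnn col hcol cl hcl U hU hcmem Us hUs hclmem hcompU
  exact psi_minor_eq Ψ G hΨ row col rw cl hrow hcol e f he hf hre hcf hrout hcout
    (by rw [himgr, himgc, hfil])

end Build

/-! ### Instantiations -/

section Inst
variable {k : Type} [Field k] {m n m' n' : ℕ}

lemma NN_card_univ : (Finset.univ : Finset (RowI m n)).card = NN m n := by
  rw [NN, Finset.card_univ, Fintype.card_coe]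

theorem subst_sqDet {A : Type} [Semiring A] [Algebra (kq k) A]
    (Ψ : SqMat k m' n' →ₐ[kq k] A) (G : RowI m n → RowI m n → A)
    (hΨ : SubstG k m n m' n' Ψ G) (hmm : m ≤ m') (hnn : n ≤ n') :
    Ψ (sqDet k m' n') = ∑ π : Equiv.Perm (Fin (NN m n)), qCoeff k (inversions ⇑π) •
      (List.ofFn fun t => G ((Finset.Icc (-(m : ℤ)) ((n : ℤ) - 1)).orderIsoOfFin rfl t)
        ((Finset.Icc (-(m : ℤ)) ((n : ℤ) - 1)).orderIsoOfFin rfl (π t))).prod := by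
  rw [sqDet]
  exact subst_minor_match Ψ G hΨ hmm hnn _ _ _ _
    ((Finset.Icc (-(m' : ℤ)) ((n' : ℤ) - 1)).orderIsoOfFin rfl).strictMono
    ((Finset.Icc (-(m' : ℤ)) ((n' : ℤ) - 1)).orderIsoOfFin rfl).strictMono
    ((Finset.Icc (-(m : ℤ)) ((n : ℤ) - 1)).orderIsoOfFin rfl).strictMono
    ((Finset.Icc (-(m : ℤ)) ((n : ℤ) - 1)).orderIsoOfFin rfl).strictMono
    Finset.univ Finset.univ NN_card_univ NN_card_univ
    (fun _ => Finset.mem_univ _) (fun _ => Finset.mem_univ _)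
    Finset.univ Finset.univ NN_card_univ NN_card_univ
    (fun _ => Finset.mem_univ _) (fun _ => Finset.mem_univ _)
    (fun _ => iff_of_true (Finset.mem_univ _) (Finset.mem_univ _))
    (fun _ => iff_of_true (Finset.mem_univ _) (Finset.mem_univ _))
    rfl

theorem bigPhi_sqDet (hmm : m ≤ m') (hnn : n ≤ n') :
    bigPhi (k := k) (m := m) (n := n) (m' := m') (n' := n') (sqDet k m' n') = sqDet k m n := by
  rw [subst_sqDet _ _ bigPhi_gen hmm hnn, sqDet, qMinorG]
  rfl

lemma qslMk_qMinorG (s : ℕ) (rw cl : Fin s → RowI m n) :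
    qslMk k m n (qMinorG k (RowI m n) (RowI m n) s rw cl)
      = ∑ π : Equiv.Perm (Fin s), qCoeff k (inversions ⇑π) •
          (List.ofFn fun t => qgSL k m n (rw t) (cl (π t))).prod := by
  rw [qMinorG, map_sum]
  refine Finset.sum_congr rfl fun σ _ => ?_
  rw [map_smul, map_list_prod, List.map_ofFn]
  rfl

lemma qslMk_sqDet : qslMk k m n (sqDet k m n) = 1 := by
  rw [qslMk]
  exact (RingQuot.mkAlgHom_rel _ ⟨rfl, rfl⟩).trans (map_one _)

theorem subst_minor_erase_small {A : Type} [Semiring A] [Algebra (kq k) A]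
    (Ψ : SqMat k m' n' →ₐ[kq k] A) (G : RowI m n → RowI m n → A)
    (hΨ : SubstG k m n m' n' Ψ G) (hmm : m ≤ m') (hnn : n ≤ n')
    (i j : RowI m' n') (hi : i.1 ∈ Finset.Icc (-(m : ℤ)) ((n : ℤ) - 1))
    (hj : j.1 ∈ Finset.Icc (-(m : ℤ)) ((n : ℤ) - 1)) :
    Ψ (qMinorG k (RowI m' n') (RowI m' n') (NN m' n' - 1)
        (fun t => ((Finset.univ.erase i).orderIsoOfFin (card_erase_univ m' n' i) t).1)
        (fun t => ((Finset.univ.erase j).orderIsoOfFin (card_erase_univ m' n' j) t).1))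
      = ∑ π : Equiv.Perm (Fin (NN m n - 1)), qCoeff k (inversions ⇑π) •
          (List.ofFn fun t => G
            (((Finset.univ.erase (⟨i.1, hi⟩ : RowI m n)).orderIsoOfFin
              (card_erase_univ m n ⟨i.1, hi⟩) t).1)
            (((Finset.univ.erase (⟨j.1, hj⟩ : RowI m n)).orderIsoOfFin
              (card_erase_univ m n ⟨j.1, hj⟩) (π t)).1)).prod := by
  apply subst_minor_match Ψ G hΨ hmm hnn _ _ _ _
    (fun a b h => Subtype.coe_lt_coe.2 (((Finset.univ.erase i).orderIsoOfFin _).strictMono h))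
    (fun a b h => Subtype.coe_lt_coe.2 (((Finset.univ.erase j).orderIsoOfFin _).strictMono h))
    (fun a b h => Subtype.coe_lt_coe.2 (((Finset.univ.erase (⟨i.1, hi⟩ : RowI m n)).orderIsoOfFin _).strictMono h))
    (fun a b h => Subtype.coe_lt_coe.2 (((Finset.univ.erase (⟨j.1, hj⟩ : RowI m n)).orderIsoOfFin _).strictMono h))
    (Finset.univ.erase i) (Finset.univ.erase j)
    (card_erase_univ m' n' i) (card_erase_univ m' n' j)
    (fun t => ((Finset.univ.erase i).orderIsoOfFin _ t).2)
    (fun t => ((Finset.univ.erase j).orderIsoOfFin _ t).2)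
    (Finset.univ.erase ⟨i.1, hi⟩) (Finset.univ.erase ⟨j.1, hj⟩)
    (card_erase_univ m n _) (card_erase_univ m n _)
    (fun t => ((Finset.univ.erase (⟨i.1, hi⟩ : RowI m n)).orderIsoOfFin _ t).2)
    (fun t => ((Finset.univ.erase (⟨j.1, hj⟩ : RowI m n)).orderIsoOfFin _ t).2)
    ?_ ?_ ?_
  · intro x
    simp only [Finset.mem_erase, Finset.mem_univ, and_true]
    apply not_congr
    rw [Subtype.ext_iff, Subtype.ext_iff]
    exact Iff.rfl
  · intro x
    simp only [Finset.mem_erase, Finset.mem_univ, and_true]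
    apply not_congr
    rw [Subtype.ext_iff, Subtype.ext_iff]
    exact Iff.rfl
  · ext x
    simp only [Finset.mem_filter, Finset.mem_erase, Finset.mem_univ, and_true, true_and]
    constructor
    · rintro ⟨_, ho⟩
      exact ⟨fun hxj => ho (hxj ▸ hj), ho⟩
    · rintro ⟨_, ho⟩
      exact ⟨fun hxi => ho (hxi ▸ hi), ho⟩

theorem subst_minor_erase_out {A : Type} [Semiring A] [Algebra (kq k) A]
    (Ψ : SqMat k m' n' →ₐ[kq k] A) (G : RowI m n → RowI m n → A)
    (hΨ : SubstG k m n m' n' Ψ G) (hmm : m ≤ m') (hnn : n ≤ n')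
    (i : RowI m' n') (hi : i.1 ∉ Finset.Icc (-(m : ℤ)) ((n : ℤ) - 1)) :
    Ψ (qMinorG k (RowI m' n') (RowI m' n') (NN m' n' - 1)
        (fun t => ((Finset.univ.erase i).orderIsoOfFin (card_erase_univ m' n' i) t).1)
        (fun t => ((Finset.univ.erase i).orderIsoOfFin (card_erase_univ m' n' i) t).1))
      = ∑ π : Equiv.Perm (Fin (NN m n)), qCoeff k (inversions ⇑π) •
          (List.ofFn fun t => G ((Finset.Icc (-(m : ℤ)) ((n : ℤ) - 1)).orderIsoOfFin rfl t)
            ((Finset.Icc (-(m : ℤ)) ((n : ℤ) - 1)).orderIsoOfFin rfl (π t))).prod := by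
  apply subst_minor_match Ψ G hΨ hmm hnn _ _ _ _
    (fun a b h => Subtype.coe_lt_coe.2 (((Finset.univ.erase i).orderIsoOfFin _).strictMono h))
    (fun a b h => Subtype.coe_lt_coe.2 (((Finset.univ.erase i).orderIsoOfFin _).strictMono h))
    ((Finset.Icc (-(m : ℤ)) ((n : ℤ) - 1)).orderIsoOfFin rfl).strictMono
    ((Finset.Icc (-(m : ℤ)) ((n : ℤ) - 1)).orderIsoOfFin rfl).strictMono
    (Finset.univ.erase i) (Finset.univ.erase i)
    (card_erase_univ m' n' i) (card_erase_univ m' n' i)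
    (fun t => ((Finset.univ.erase i).orderIsoOfFin _ t).2)
    (fun t => ((Finset.univ.erase i).orderIsoOfFin _ t).2)
    Finset.univ Finset.univ NN_card_univ NN_card_univ
    (fun _ => Finset.mem_univ _) (fun _ => Finset.mem_univ _)
    ?_ ?_ rfl
  · intro x
    simp only [Finset.mem_erase, Finset.mem_univ, and_true, iff_true]
    intro hc
    exact hi (hc ▸ x.2)
  · intro x
    simp only [Finset.mem_erase, Finset.mem_univ, and_true, iff_true]
    intro hc
    exact hi (hc ▸ x.2)

end Inst

/-! ### Homomorphisms on the quantum SL rings -/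

section QSLHoms
variable {k : Type} [Field k] {m n m' n' : ℕ}

lemma qsl_hom_ext {A : Type} [Semiring A] [Algebra (kq k) A]
    {f g : QSL k m n →ₐ[kq k] A}
    (h : ∀ i j : RowI m n, f (qgSL k m n i j) = g (qgSL k m n i j)) : f = g := by
  have key : (f.comp (qslMk k m n)).comp
        (RingQuot.mkAlgHom (kq k) (QMRel k (RowI m n) (RowI m n)))
      = (g.comp (qslMk k m n)).comp
        (RingQuot.mkAlgHom (kq k) (QMRel k (RowI m n) (RowI m n))) := by
    apply FreeAlgebra.hom_ext
    funext p
    exact h p.1 p.2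
  apply AlgHom.ext
  intro x
  obtain ⟨y, rfl⟩ := RingQuot.mkAlgHom_surjective (kq k) _ x
  obtain ⟨z, rfl⟩ := RingQuot.mkAlgHom_surjective (kq k) _ y
  exact AlgHom.congr_fun key z

theorem phi_exists (hmm : m ≤ m') (hnn : n ≤ n') :
    ∃ φ : QSL k m' n' →ₐ[kq k] QSL k m n, phiqProp k m n m' n' φ := by
  have hrel : ∀ ⦃x y : SqMat k m' n'⦄, (x = sqDet k m' n' ∧ y = 1) →
      ((qslMk k m n).comp (bigPhi (k := k) (m := m) (n := n) (m' := m') (n' := n'))) x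
        = ((qslMk k m n).comp bigPhi) y := by
    rintro x y ⟨rfl, rfl⟩
    simp only [AlgHom.coe_comp, Function.comp_apply, bigPhi_sqDet hmm hnn, map_one]
    exact qslMk_sqDet
  refine ⟨RingQuot.liftAlgHom (kq k) ⟨(qslMk k m n).comp bigPhi, hrel⟩, ?_⟩
  intro i j
  have h1 : qgSL k m' n' i j
      = RingQuot.mkAlgHom (kq k) _ (qgen k (RowI m' n') (RowI m' n') i j) := rfl
  rw [h1, RingQuot.liftAlgHom_mkAlgHom_apply]
  simp only [AlgHom.coe_comp, Function.comp_apply]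
  rw [bigPhi_gen i j]
  by_cases hc : (i.1 ∈ Finset.Icc (-(m : ℤ)) ((n : ℤ) - 1))
      ∧ (j.1 ∈ Finset.Icc (-(m : ℤ)) ((n : ℤ) - 1))
  · rw [dif_pos hc, dif_pos hc]
    rfl
  · rw [dif_neg hc, dif_neg hc]
    by_cases hv : i.1 = j.1
    · rw [if_pos hv, if_pos hv, map_one]
    · rw [if_neg hv, if_neg hv, map_zero]

lemma phi_SubstG (φ : QSL k m' n' →ₐ[kq k] QSL k m n) (hφ : phiqProp k m n m' n' φ) :
    SubstG k m n m' n' (φ.comp (qslMk k m' n')) (qgSL k m n) := by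
  intro i j
  simp only [AlgHom.coe_comp, Function.comp_apply]
  exact hφ i j

theorem eps_comm (φ : QSL k m' n' →ₐ[kq k] QSL k m n) (hφ : phiqProp k m n m' n' φ)
    (ε : QSL k m n →ₐ[kq k] kq k)
    (hε : ∀ i j : RowI m n, ε (qgSL k m n i j) = if i = j then 1 else 0)
    (ε' : QSL k m' n' →ₐ[kq k] kq k)
    (hε' : ∀ i j : RowI m' n', ε' (qgSL k m' n' i j) = if i = j then 1 else 0) :
    ε.comp φ = ε' := by
  apply qsl_hom_ext
  intro i j
  simp only [AlgHom.coe_comp, Function.comp_apply]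
  rw [hε' i j, hφ i j]
  by_cases hc : (i.1 ∈ Finset.Icc (-(m : ℤ)) ((n : ℤ) - 1))
      ∧ (j.1 ∈ Finset.Icc (-(m : ℤ)) ((n : ℤ) - 1))
  · rw [dif_pos hc, hε]
    by_cases hv : i = j
    · have hv' : (⟨i.1, hc.1⟩ : RowI m n) = ⟨j.1, hc.2⟩ := by
        apply Subtype.ext
        show (i : ℤ) = (j : ℤ)
        exact congrArg Subtype.val hv
      rw [if_pos hv', if_pos hv]
    · have hv' : ¬((⟨i.1, hc.1⟩ : RowI m n) = ⟨j.1, hc.2⟩) := by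
        intro hh
        apply hv
        apply Subtype.ext
        exact Subtype.mk_eq_mk.1 hh
      rw [if_neg hv', if_neg hv]
  · rw [dif_neg hc]
    by_cases hv : i.1 = j.1
    · rw [if_pos hv, map_one, if_pos (Subtype.ext hv)]
    · rw [if_neg hv, map_zero, if_neg (fun hij => hv (congrArg Subtype.val hij))]

theorem delta_comm (hmm : m ≤ m') (hnn : n ≤ n')
    (φ : QSL k m' n' →ₐ[kq k] QSL k m n) (hφ : phiqProp k m n m' n' φ)
    (Δ : QSL k m n →ₐ[kq k] QSL k m n ⊗[kq k] QSL k m n)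
    (hΔ : ∀ i j : RowI m n, Δ (qgSL k m n i j) =
      ∑ l : RowI m n, qgSL k m n i l ⊗ₜ[kq k] qgSL k m n l j)
    (Δ' : QSL k m' n' →ₐ[kq k] QSL k m' n' ⊗[kq k] QSL k m' n')
    (hΔ' : ∀ i j : RowI m' n', Δ' (qgSL k m' n' i j) =
      ∑ l : RowI m' n', qgSL k m' n' i l ⊗ₜ[kq k] qgSL k m' n' l j) :
    (Algebra.TensorProduct.map φ φ).comp Δ' = Δ.comp φ := by
  classical
  apply qsl_hom_ext
  intro i j
  simp only [AlgHom.coe_comp, Function.comp_apply]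
  rw [hΔ' i j, map_sum]
  have hterm : ∀ l : RowI m' n',
      (Algebra.TensorProduct.map φ φ) (qgSL k m' n' i l ⊗ₜ[kq k] qgSL k m' n' l j)
        = φ (qgSL k m' n' i l) ⊗ₜ[kq k] φ (qgSL k m' n' l j) := fun l =>
    Algebra.TensorProduct.map_tmul _ _ _ _
  rw [Finset.sum_congr rfl (fun l _ => hterm l), hφ i j]
  by_cases hc : (i.1 ∈ Finset.Icc (-(m : ℤ)) ((n : ℤ) - 1))
      ∧ (j.1 ∈ Finset.Icc (-(m : ℤ)) ((n : ℤ) - 1))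
  · rw [dif_pos hc, hΔ ⟨i.1, hc.1⟩ ⟨j.1, hc.2⟩]
    have hzero : ∀ l ∈ (Finset.univ : Finset (RowI m' n')),
        l ∉ Finset.univ.image (embR hmm hnn) →
        φ (qgSL k m' n' i l) ⊗ₜ[kq k] φ (qgSL k m' n' l j) = 0 := by
      intro l _ hl
      have hls : l.1 ∉ Finset.Icc (-(m : ℤ)) ((n : ℤ) - 1) := by
        intro hsm
        exact hl (Finset.mem_image.2 ⟨⟨l.1, hsm⟩, Finset.mem_univ _, Subtype.ext rfl⟩)
      have h0 : φ (qgSL k m' n' i l) = 0 := by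
        rw [hφ i l, dif_neg (fun hc2 => hls hc2.2),
          if_neg (fun hv => hls (by rw [← hv]; exact hc.1))]
      rw [h0, TensorProduct.zero_tmul]
    rw [← Finset.sum_subset (Finset.subset_univ _) hzero,
      Finset.sum_image (fun a _ b _ hab => (embR_strictMono hmm hnn).injective hab)]
    apply Finset.sum_congr rfl
    intro l' _
    rw [hφ i (embR hmm hnn l'), hφ (embR hmm hnn l') j,
      dif_pos ⟨hc.1, (l' : RowI m n).2⟩, dif_pos ⟨(l' : RowI m n).2, hc.2⟩]
    rfl
  · rw [dif_neg hc]
    by_cases hv : i.1 = j.1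
    · have hij : i = j := Subtype.ext hv
      subst hij
      rw [if_pos rfl, map_one]
      rw [Finset.sum_eq_single i]
      · rw [hφ i i, dif_neg hc, if_pos rfl, Algebra.TensorProduct.one_def]
      · intro l _ hl
        have h0 : φ (qgSL k m' n' i l) = 0 := by
          by_cases hcl : (i.1 ∈ Finset.Icc (-(m : ℤ)) ((n : ℤ) - 1))
              ∧ (l.1 ∈ Finset.Icc (-(m : ℤ)) ((n : ℤ) - 1))
          · exact absurd ⟨hcl.1, hcl.1⟩ hc
          · rw [hφ i l, dif_neg hcl,
              if_neg (fun hvv => hl (Subtype.ext hvv.symm))]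
        rw [h0, TensorProduct.zero_tmul]
      · intro hni
        exact absurd (Finset.mem_univ i) hni
    · rw [if_neg hv, map_zero]
      apply Finset.sum_eq_zero
      intro l _
      by_cases hcl : i.1 ∈ Finset.Icc (-(m : ℤ)) ((n : ℤ) - 1)
      · -- then j is not small
        have hjs : j.1 ∉ Finset.Icc (-(m : ℤ)) ((n : ℤ) - 1) := fun hj => hc ⟨hcl, hj⟩
        by_cases hls : l.1 ∈ Finset.Icc (-(m : ℤ)) ((n : ℤ) - 1)
        · have h0 : φ (qgSL k m' n' l j) = 0 := by
            rw [hφ l j, dif_neg (fun hc2 => hjs hc2.2),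
              if_neg (fun hvv => hjs (by rw [← hvv]; exact hls))]
          rw [h0, TensorProduct.tmul_zero]
        · have h0 : φ (qgSL k m' n' i l) = 0 := by
            rw [hφ i l, dif_neg (fun hc2 => hls hc2.2),
              if_neg (fun hvv => hls (by rw [← hvv]; exact hcl))]
          rw [h0, TensorProduct.zero_tmul]
      · by_cases hvl : i.1 = l.1
        · have h0 : φ (qgSL k m' n' l j) = 0 := by
            rw [hφ l j, dif_neg (fun hc2 => hcl (by rw [hvl]; exact hc2.1)),
              if_neg (fun hvv => hv (hvl.trans hvv))]
          rw [h0, TensorProduct.tmul_zero]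
        · have h0 : φ (qgSL k m' n' i l) = 0 := by
            rw [hφ i l, dif_neg (fun hc2 => hcl hc2.1), if_neg hvl]
          rw [h0, TensorProduct.zero_tmul]

end QSLHoms

/-! ### Antipode compatibility -/

section Antipode
variable {k : Type} [Field k] {m n m' n' : ℕ}

lemma negqPow_zero : negqPow k 0 = 1 := by
  rw [negqPow, if_pos (by simp : Even (0 : ℤ)), LaurentPolynomial.T_zero, one_mul]

theorem antipode_comm (hmm : m ≤ m') (hnn : n ≤ n')
    (φ : QSL k m' n' →ₐ[kq k] QSL k m n) (hφ : phiqProp k m n m' n' φ)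
    (S : QSL k m n →ₗ[kq k] QSL k m n) (hS1 : S 1 = 1)
    (hSm : ∀ x y : QSL k m n, S (x * y) = S y * S x)
    (hSg : ∀ i j : RowI m n, S (qgSL k m n i j) =
      negqPow k (i.1 - j.1) •
        qslMk k m n (qMinorG k (RowI m n) (RowI m n) (NN m n - 1)
          (fun t => ((Finset.univ.erase i).orderIsoOfFin (card_erase_univ m n i) t).1)
          (fun t => ((Finset.univ.erase j).orderIsoOfFin (card_erase_univ m n j) t).1)))
    (S' : QSL k m' n' →ₗ[kq k] QSL k m' n') (hS'1 : S' 1 = 1)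
    (hS'm : ∀ x y : QSL k m' n', S' (x * y) = S' y * S' x)
    (hS'g : ∀ i j : RowI m' n', S' (qgSL k m' n' i j) =
      negqPow k (i.1 - j.1) •
        qslMk k m' n' (qMinorG k (RowI m' n') (RowI m' n') (NN m' n' - 1)
          (fun t => ((Finset.univ.erase i).orderIsoOfFin (card_erase_univ m' n' i) t).1)
          (fun t => ((Finset.univ.erase j).orderIsoOfFin (card_erase_univ m' n' j) t).1))) :
    ∀ x : QSL k m' n', φ (S' x) = S (φ x) := by
  have hΨ := phi_SubstG φ hφ
  have hgen : ∀ i j : RowI m' n', φ (S' (qgSL k m' n' i j)) = S (φ (qgSL k m' n' i j)) := by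
    intro i j
    by_cases hc : (i.1 ∈ Finset.Icc (-(m : ℤ)) ((n : ℤ) - 1))
        ∧ (j.1 ∈ Finset.Icc (-(m : ℤ)) ((n : ℤ) - 1))
    · have hmin := subst_minor_erase_small (φ.comp (qslMk k m' n')) _ hΨ hmm hnn i j hc.1 hc.2
      simp only [AlgHom.coe_comp, Function.comp_apply] at hmin
      rw [hS'g i j, map_smul, hmin, hφ i j, dif_pos hc, hSg ⟨i.1, hc.1⟩ ⟨j.1, hc.2⟩,
        qslMk_qMinorG]
    · by_cases hv : i.1 = j.1
      · have hij : i = j := Subtype.ext hv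
        subst hij
        have hiout : i.1 ∉ Finset.Icc (-(m : ℤ)) ((n : ℤ) - 1) := fun h => hc ⟨h, h⟩
        have hmin := subst_minor_erase_out (φ.comp (qslMk k m' n')) _ hΨ hmm hnn i hiout
        simp only [AlgHom.coe_comp, Function.comp_apply] at hmin
        rw [hS'g i i, map_smul, hmin, hφ i i, dif_neg hc, if_pos rfl, hS1, sub_self,
          negqPow_zero, one_smul]
        have h2 : qslMk k m n (sqDet k m n)
            = ∑ π : Equiv.Perm (Fin (NN m n)), qCoeff k (inversions ⇑π) •
              (List.ofFn fun t => qgSL k m n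
                ((Finset.Icc (-(m : ℤ)) ((n : ℤ) - 1)).orderIsoOfFin rfl t)
                ((Finset.Icc (-(m : ℤ)) ((n : ℤ) - 1)).orderIsoOfFin rfl (π t))).prod :=
          qslMk_qMinorG (NN m n) _ _
        rw [← h2, qslMk_sqDet]
      · have hij : i ≠ j := fun h => hv (congrArg Subtype.val h)
        rw [hS'g i j, map_smul, hφ i j, dif_neg hc, if_neg hv, map_zero]
        have h0 : φ (qslMk k m' n' (qMinorG k (RowI m' n') (RowI m' n') (NN m' n' - 1)
            (fun t => ((Finset.univ.erase i).orderIsoOfFin (card_erase_univ m' n' i) t).1)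
            (fun t => ((Finset.univ.erase j).orderIsoOfFin (card_erase_univ m' n' j) t).1)))
            = 0 := by
          rcases not_and_or.1 hc with hiout | hjout
          · -- i is outside; it appears among the columns but not the rows
            obtain ⟨t0, ht0⟩ := range_eq_of_strictMono (card_erase_univ m' n' j)
              (f := fun t => ((Finset.univ.erase j).orderIsoOfFin (card_erase_univ m' n' j) t).1)
              (fun a b h => Subtype.coe_lt_coe.2
                (((Finset.univ.erase j).orderIsoOfFin _).strictMono h))
              (fun t => ((Finset.univ.erase j).orderIsoOfFin _ t).2)
              i (Finset.mem_erase.2 ⟨hij, Finset.mem_univ _⟩)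
            have ht0' : (((Finset.univ.erase j).orderIsoOfFin (card_erase_univ m' n' j)) t0).1
                = i := ht0
            have ht0v := congrArg Subtype.val ht0'
            have hz := psi_minor_zero_col (φ.comp (qslMk k m' n')) _ hΨ
              (fun t => ((Finset.univ.erase i).orderIsoOfFin (card_erase_univ m' n' i) t).1)
              (fun t => ((Finset.univ.erase j).orderIsoOfFin (card_erase_univ m' n' j) t).1)
              t0 (by rw [ht0v]; exact hiout)
              (fun t hvv => (Finset.mem_erase.1
                (((Finset.univ.erase i).orderIsoOfFin (card_erase_univ m' n' i) t).2)).1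
                (Subtype.ext (by rw [ht0v] at hvv; exact hvv)))
            simpa only [AlgHom.coe_comp, Function.comp_apply] using hz
          · -- j is outside; it appears among the rows but not the columns
            obtain ⟨t0, ht0⟩ := range_eq_of_strictMono (card_erase_univ m' n' i)
              (f := fun t => ((Finset.univ.erase i).orderIsoOfFin (card_erase_univ m' n' i) t).1)
              (fun a b h => Subtype.coe_lt_coe.2
                (((Finset.univ.erase i).orderIsoOfFin _).strictMono h))
              (fun t => ((Finset.univ.erase i).orderIsoOfFin _ t).2)
              j (Finset.mem_erase.2 ⟨hij.symm, Finset.mem_univ _⟩)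
            have ht0' : (((Finset.univ.erase i).orderIsoOfFin (card_erase_univ m' n' i)) t0).1
                = j := ht0
            have ht0v := congrArg Subtype.val ht0'
            have hz := psi_minor_zero_row (φ.comp (qslMk k m' n')) _ hΨ
              (fun t => ((Finset.univ.erase i).orderIsoOfFin (card_erase_univ m' n' i) t).1)
              (fun t => ((Finset.univ.erase j).orderIsoOfFin (card_erase_univ m' n' j) t).1)
              t0 (by rw [ht0v]; exact hjout)
              (fun t hvv => (Finset.mem_erase.1
                (((Finset.univ.erase j).orderIsoOfFin (card_erase_univ m' n' j) t).2)).1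
                (Subtype.ext (by rw [ht0v] at hvv; exact hvv)))
            simpa only [AlgHom.coe_comp, Function.comp_apply] using hz
        rw [h0, smul_zero]
  intro x
  obtain ⟨y, rfl⟩ := RingQuot.mkAlgHom_surjective (kq k) _ x
  obtain ⟨z, rfl⟩ := RingQuot.mkAlgHom_surjective (kq k) _ y
  induction z using FreeAlgebra.induction with
  | grade0 r =>
    rw [AlgHom.commutes, AlgHom.commutes, Algebra.algebraMap_eq_smul_one, map_smul, hS'1,
      map_smul, map_one, map_smul, hS1]
  | grade1 p =>
    exact hgen p.1 p.2
  | mul a b ha hb =>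
    rw [map_mul (RingQuot.mkAlgHom (kq k) (QMRel k (RowI m' n') (RowI m' n'))) a b,
      map_mul (RingQuot.mkAlgHom (kq k) (fun x y : SqMat k m' n' => x = sqDet k m' n' ∧ y = 1)),
      hS'm, map_mul φ, ha, hb, ← hSm, ← map_mul φ]
  | add a b ha hb =>
    rw [map_add (RingQuot.mkAlgHom (kq k) (QMRel k (RowI m' n') (RowI m' n'))) a b,
      map_add (RingQuot.mkAlgHom (kq k) (fun x y : SqMat k m' n' => x = sqDet k m' n' ∧ y = 1)),
      map_add S', map_add φ, ha, hb, ← map_add S, ← map_add φ]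

end Antipode

/-- the substitution `g_{i,j} ↦ g_{i,j}` (small range), `g_{i,i} ↦ 1`
(outside), `g_{i,j} ↦ 0` (otherwise) sends the big quantum determinant to the small one
and induces a well-defined `k_q`-algebra homomorphism
`φ^q : k_q[SL_{m',n'}] → k_q[SL_{m,n}]`, which is a morphism of Hopf algebras. -/
theorem stmt15 (k : Type) [Field k] (m n m' n' : ℕ) (hm : 0 < m) (hn : 0 < n)
    (hmm : m ≤ m') (hnn : n ≤ n') :
    -- the substitution is well defined on the square quantum matrix algebra and
    -- sends the quantum determinant to the quantum determinant
    (∃ Φ : SqMat k m' n' →ₐ[kq k] SqMat k m n,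
      (∀ i j : RowI m' n',
        Φ (qgen k (RowI m' n') (RowI m' n') i j) =
          if h : (i.1 ∈ Finset.Icc (-(m : ℤ)) ((n : ℤ) - 1)) ∧
              (j.1 ∈ Finset.Icc (-(m : ℤ)) ((n : ℤ) - 1)) then
            qgen k (RowI m n) (RowI m n) ⟨i.1, h.1⟩ ⟨j.1, h.2⟩
          else if i.1 = j.1 then 1 else 0) ∧
      Φ (sqDet k m' n') = sqDet k m n) ∧
    -- hence a well-defined homomorphism φ^q between the quantum SL rings
    (∃ φ : QSL k m' n' →ₐ[kq k] QSL k m n, phiqProp k m n m' n' φ) ∧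
    -- and any such φ^q is a morphism of Hopf algebras
    (∀ (φ : QSL k m' n' →ₐ[kq k] QSL k m n), phiqProp k m n m' n' φ →
      ∀ (Δ : QSL k m n →ₐ[kq k] QSL k m n ⊗[kq k] QSL k m n),
      (∀ i j : RowI m n, Δ (qgSL k m n i j) =
        ∑ l : RowI m n, qgSL k m n i l ⊗ₜ[kq k] qgSL k m n l j) →
      ∀ (Δ' : QSL k m' n' →ₐ[kq k] QSL k m' n' ⊗[kq k] QSL k m' n'),
      (∀ i j : RowI m' n', Δ' (qgSL k m' n' i j) =
        ∑ l : RowI m' n', qgSL k m' n' i l ⊗ₜ[kq k] qgSL k m' n' l j) →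
      ∀ (ε : QSL k m n →ₐ[kq k] kq k),
      (∀ i j : RowI m n, ε (qgSL k m n i j) = if i = j then 1 else 0) →
      ∀ (ε' : QSL k m' n' →ₐ[kq k] kq k),
      (∀ i j : RowI m' n', ε' (qgSL k m' n' i j) = if i = j then 1 else 0) →
      -- the antipodes, as `k_q`-linear algebra anti-homomorphisms
      ∀ (S : QSL k m n →ₗ[kq k] QSL k m n),
      S 1 = 1 → (∀ x y : QSL k m n, S (x * y) = S y * S x) →
      (∀ i j : RowI m n, S (qgSL k m n i j) =
        negqPow k (i.1 - j.1) •
          qslMk k m n (qMinorG k (RowI m n) (RowI m n) (NN m n - 1)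
            (fun t => ((Finset.univ.erase i).orderIsoOfFin (card_erase_univ m n i) t).1)
            (fun t => ((Finset.univ.erase j).orderIsoOfFin (card_erase_univ m n j) t).1))) →
      ∀ (S' : QSL k m' n' →ₗ[kq k] QSL k m' n'),
      S' 1 = 1 → (∀ x y : QSL k m' n', S' (x * y) = S' y * S' x) →
      (∀ i j : RowI m' n', S' (qgSL k m' n' i j) =
        negqPow k (i.1 - j.1) •
          qslMk k m' n' (qMinorG k (RowI m' n') (RowI m' n') (NN m' n' - 1)
            (fun t => ((Finset.univ.erase i).orderIsoOfFin (card_erase_univ m' n' i) t).1)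
            (fun t => ((Finset.univ.erase j).orderIsoOfFin (card_erase_univ m' n' j) t).1))) →
      (Algebra.TensorProduct.map φ φ).comp Δ' = Δ.comp φ ∧
        ε.comp φ = ε' ∧
        (∀ x : QSL k m' n', φ (S' x) = S (φ x))) := by
  refine ⟨⟨bigPhi, bigPhi_gen, bigPhi_sqDet hmm hnn⟩, phi_exists hmm hnn, ?_⟩
  intro φ hφ Δ hΔ Δ' hΔ' ε hε ε' hε' S hS1 hSm hSg S' hS'1 hS'm hS'g
  exact ⟨delta_comm hmm hnn φ hφ Δ hΔ Δ' hΔ', eps_comm φ hφ ε hε ε' hε',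
    antipode_comm hmm hnn φ hφ S hS1 hSm hSg S' hS'1 hS'm hS'g⟩

end
end
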